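/- arXiv:2305.12803 — 3 statements merged into one kernel-verified Lean document; each statement's English description precedes it below -/
import Mathlib

section
/- Let I and J be finite common independent sets of M and N with I ∼ J. Then for all x, y ∈ E there is an xy-augmenting path for I if and only if there is an xy-augmenting path for J; furthermore, if P is an xy-augmenting path for I and Q is an xy-augmenting path for J, then I △ P ∼ J △ Q. -/
open Set Matroid
open scoped symmDiff

namespace AZ

variable {α : Type*}

/-- The contraction `M / X`, defined (in the standard way) as the dual of the
restriction of the dual to the complement of `X`. -/
def con (M : Matroid α) (X : Set α) : Matroid α := (M✶ ↾ (M.E \ X))✶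

/-- The deletion `M − X := M ↾ (E ∖ X)`. -/
def del (M : Matroid α) (X : Set α) : Matroid α := M ↾ (M.E \ X)

/-- The matroidal Hall condition `Hall(M,N)`: for every `X ⊆ E` such that `M ↾ X` has a
base that is independent in `N.X = N/(E∖X)`, also `N.X` has a base independent in `M ↾ X`. -/
def Hall (M N : Matroid α) : Prop :=
  ∀ X ⊆ N.E,
    (∃ B, (M ↾ X).IsBase B ∧ (con N (N.E \ X)).Indep B) →
    ∃ B, (con N (N.E \ X)).IsBase B ∧ (M ↾ X).Indep B

/-- `(M,N)` is finitely matchable: every finite `F ⊆ E` is `N`-spanned by an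
`M`-independent set. -/
def FinitelyMatchable (M N : Matroid α) : Prop :=
  ∀ F ⊆ M.E, F.Finite → ∃ I, M.Indep I ∧ F ⊆ N.closure I

/-- `G ⊆ E` is `(M,N)`-negligible: for all finite `X ⊆ G` and finite `Y ⊆ E ∖ G` there
is an `M/Y`-independent set that `N`-spans `X`. -/
def Negligible (M N : Matroid α) (G : Set α) : Prop :=
  G ⊆ M.E ∧
    ∀ X ⊆ G, X.Finite → ∀ Y ⊆ M.E \ G, Y.Finite →
      ∃ I, (con M Y).Indep I ∧ X ⊆ N.closure I

/-- A common independent set `I` of `M` and `N` is `(M,N)`-stable if every `J ⊆ E ∖ I`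
that is independent in `M/I` and in `N` is also independent in `N/I`. -/
def Stable (M N : Matroid α) (I : Set α) : Prop :=
  M.Indep I ∧ N.Indep I ∧
    ∀ J ⊆ M.E \ I, (con M I).Indep J → N.Indep J → (con N I).Indep J

/-- A circuit of a matroid: a minimal dependent subset of the ground set. -/
def Circuit (M : Matroid α) (C : Set α) : Prop :=
  C ⊆ M.E ∧ ¬ M.Indep C ∧ ∀ D ⊂ C, M.Indep D

/-- The arc relation of the exchange digraph `D(I)`: for `x ∈ E ∖ I` and `y ∈ I` there is
an arc `x → y` if `x ∈ span_M(I)` and `y` lies in the unique `M`-circuit contained in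
`I + x`, and an arc `y → x` if `x ∈ span_N(I)` and `y` lies in the unique `N`-circuit
contained in `I + x`. -/
def Arc (M N : Matroid α) (I : Set α) (x y : α) : Prop :=
  (x ∈ M.E \ I ∧ y ∈ I ∧ x ∈ M.closure I ∧
    ∃ C, Circuit M C ∧ C ⊆ insert x I ∧ x ∈ C ∧ y ∈ C) ∨
  (x ∈ I ∧ y ∈ M.E \ I ∧ y ∈ N.closure I ∧
    ∃ C, Circuit N C ∧ C ⊆ insert y I ∧ y ∈ C ∧ x ∈ C)

/-- `Reach M N I x` is `E(x,I)`: the set of elements reachable from `x` by a directed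
path in `D(I)`. -/
def Reach (M N : Matroid α) (I : Set α) (x : α) : Set α :=
  {y | Relation.ReflTransGen (Arc M N I) x y}

/-- `P = {f 0, …, f (2n)}` is an `xy`-augmenting path for `I`: it starts at
`x = f 0 ∉ span_N(I)`, ends at `y = f (2n) ∉ span_M(I)`, consecutive elements are joined
by arcs of `D(I)`, and there are no jumping arcs. -/
def IsAugPath (M N : Matroid α) (I P : Set α) (x y : α) : Prop :=
  ∃ (n : ℕ) (f : ℕ → α),
    P = f '' Set.Iic (2 * n) ∧ P ⊆ M.E ∧ Set.InjOn f (Set.Iic (2 * n)) ∧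
    f 0 = x ∧ f (2 * n) = y ∧
    x ∉ N.closure I ∧ y ∉ M.closure I ∧
    (∀ i < 2 * n, Arc M N I (f i) (f (i + 1))) ∧
    (∀ i j, i + 1 < j → j ≤ 2 * n → ¬ Arc M N I (f i) (f j))

/-- One augmentation step: `J = I △ P` for some augmenting path `P` for `I`. -/
def AugStep (M N : Matroid α) (I J : Set α) : Prop :=
  ∃ P x y, IsAugPath M N I P x y ∧ J = I ∆ P

/-- `J ∈ A(I)`: `J` is obtained from `I` by finitely many successive augmentations. -/
def MemA (M N : Matroid α) (I J : Set α) : Prop :=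
  Relation.ReflTransGen (AugStep M N) I J

/-- `O = {f 0, …, f (2n+1)}` is a switching cycle for `I`: the arcs of `D(I)` inside `O`
are exactly the arcs `f i → f (i+1 mod 2n+2)`, forming a chordless directed cycle. -/
def SwitchCycle (M N : Matroid α) (I O : Set α) : Prop :=
  ∃ (n : ℕ) (f : ℕ → α),
    O = f '' Set.Iio (2 * n + 2) ∧ O ⊆ M.E ∧ Set.InjOn f (Set.Iio (2 * n + 2)) ∧
    ∀ i < 2 * n + 2, ∀ j < 2 * n + 2,
      (Arc M N I (f i) (f j) ↔ j = (i + 1) % (2 * n + 2))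

/-- The preorder on finite common independent sets: `I ⊴ J` iff
`I ⊆ span_M(J) ∩ span_N(J)`. -/
def Le (M N : Matroid α) (I J : Set α) : Prop :=
  I ⊆ M.closure J ∩ N.closure J

/-- The equivalence relation: `I ∼ J` iff `I ⊴ J` and `J ⊴ I`. -/
def Sim (M N : Matroid α) (I J : Set α) : Prop :=
  Le M N I J ∧ Le M N J I

/-- A family of finite common independent sets of `M` and `N` that is closed under `∼`
and is `⊴`-directed. -/
def DirFam (M N : Matroid α) (D : Set (Set α)) : Prop :=
  (∀ I ∈ D, I.Finite ∧ M.Indep I ∧ N.Indep I) ∧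
  (∀ I ∈ D, ∀ J, J.Finite → M.Indep J → N.Indep J → Sim M N I J → J ∈ D) ∧
  (∀ I ∈ D, ∀ J ∈ D, ∃ K ∈ D, Le M N I K ∧ Le M N J K)

/-- A maximal directed family of finite common independent sets. -/
def MaxDirFam (M N : Matroid α) (D : Set (Set α)) : Prop :=
  DirFam M N D ∧ ∀ D', DirFam M N D' → D ⊆ D' → D' = D

section Aux

variable {M N : Matroid α} {I J K P C S T : Set α} {x y z a u v : α}

lemma circuit_mem_closure_diff (hC : Circuit M C) (ha : a ∈ C) :
    a ∈ M.closure (C \ {a}) := by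
  have hCa : M.Indep (C \ {a}) := hC.2.2 _ (Set.sdiff_singleton_ssubset.mpr ha)
  by_contra h
  have hind : M.Indep (insert a (C \ {a})) :=
    (hCa.insert_indep_iff_of_notMem (by simp)).mpr ⟨hC.1 ha, h⟩
  rw [Set.insert_diff_singleton, Set.insert_eq_of_mem ha] at hind
  exact hC.2.1 hind

lemma exists_circuit_subset_aux (M : Matroid α) :
    ∀ n (X : Set α), X.ncard ≤ n → X.Finite → X ⊆ M.E → ¬ M.Indep X →
      ∃ C, C ⊆ X ∧ Circuit M C := by
  intro n
  induction n with
  | zero =>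
    intro X hn hfin hXE hdep
    rw [Nat.le_zero, Set.ncard_eq_zero hfin] at hn
    exact absurd (hn ▸ M.empty_indep) hdep
  | succ n ih =>
    intro X hn hfin hXE hdep
    by_cases h : ∀ D ⊂ X, M.Indep D
    · exact ⟨X, Set.Subset.rfl, hXE, hdep, h⟩
    · push_neg at h
      obtain ⟨D, hDX, hDdep⟩ := h
      obtain ⟨C, hCD, hC⟩ := ih D (by have := Set.ncard_lt_ncard hDX hfin; omega)
        (hfin.subset hDX.subset) (hDX.subset.trans hXE) hDdep
      exact ⟨C, hCD.trans hDX.subset, hC⟩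

lemma exists_fund_circuit (hI : M.Indep I) (hfin : I.Finite) (hz : z ∈ M.closure I)
    (hzI : z ∉ I) : ∃ C, Circuit M C ∧ C ⊆ insert z I ∧ z ∈ C := by
  have hzE : z ∈ M.E := M.mem_ground_of_mem_closure hz
  have hdep : ¬ M.Indep (insert z I) := by
    intro h
    exact ((hI.insert_indep_iff_of_notMem hzI).mp h).2 hz
  obtain ⟨C, hCsub, hC⟩ := exists_circuit_subset_aux M (insert z I).ncard (insert z I) le_rfl
    (hfin.insert z) (Set.insert_subset hzE hI.subset_ground) hdep
  refine ⟨C, hC, hCsub, ?_⟩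
  by_contra hzC
  refine hC.2.1 (hI.subset fun w hw => ?_)
  rcases Set.mem_insert_iff.mp (hCsub hw) with rfl | h
  · exact absurd hw hzC
  · exact h

lemma exchange_single (hI : M.Indep I) (hC : Circuit M C) (hCsub : C ⊆ insert z I)
    (hzC : z ∈ C) (hzI : z ∉ I) (haC : a ∈ C) (haI : a ∈ I) :
    M.Indep (insert z (I \ {a})) ∧ M.closure (insert z (I \ {a})) = M.closure I := by
  have hzE : z ∈ M.E := hC.1 hzC
  have hIa : M.Indep (I \ {a}) := hI.subset Set.diff_subset
  have haCcl : a ∈ M.closure (C \ {a}) := circuit_mem_closure_diff hC haC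
  have hCa_sub : C \ {a} ⊆ insert z (I \ {a}) := by
    rintro w ⟨hwC, hwa⟩
    rcases Set.mem_insert_iff.mp (hCsub hwC) with rfl | hwI
    · exact Set.mem_insert _ _
    · exact Set.mem_insert_of_mem _ ⟨hwI, hwa⟩
  have hCz_sub : C \ {z} ⊆ I := by
    rintro w ⟨hwC, hwz⟩
    rcases Set.mem_insert_iff.mp (hCsub hwC) with rfl | hwI
    · exact absurd rfl hwz
    · exact hwI
  have hzclI : z ∈ M.closure I :=
    M.closure_subset_closure hCz_sub (circuit_mem_closure_diff hC hzC)
  have hind : M.Indep (insert z (I \ {a})) := by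
    by_contra hdep
    have hzcl' : z ∈ M.closure (I \ {a}) := by
      by_contra hcl
      exact hdep ((hIa.insert_indep_iff_of_notMem (fun h => hzI h.1)).mpr ⟨hzE, hcl⟩)
    have hsub2 : insert z (I \ {a}) ⊆ M.closure (I \ {a}) :=
      Set.insert_subset hzcl'
        (M.subset_closure _ (Set.diff_subset.trans hI.subset_ground))
    have : a ∈ M.closure (I \ {a}) :=
      (M.closure_subset_closure_of_subset_closure (hCa_sub.trans hsub2)) haCcl
    exact hI.notMem_closure_diff_of_mem haI this
  have hsub3 : insert z (I \ {a}) ⊆ M.closure I :=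
    Set.insert_subset hzclI
      (Set.diff_subset.trans (M.subset_closure I hI.subset_ground))
  have hle : M.closure (insert z (I \ {a})) ⊆ M.closure I :=
    M.closure_subset_closure_of_subset_closure hsub3
  have hge : M.closure I ⊆ M.closure (insert z (I \ {a})) := by
    apply M.closure_subset_closure_of_subset_closure
    intro w hw
    by_cases hwa : w = a
    · subst hwa
      exact M.closure_subset_closure hCa_sub haCcl
    · exact M.subset_closure _ hind.subset_ground (Set.mem_insert_of_mem _ ⟨hw, hwa⟩)
  exact ⟨hind, hle.antisymm hge⟩

lemma tri_exchange (M : Matroid α) :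
    ∀ (m : ℕ) (I : Set α) (z a : ℕ → α) (C : ℕ → Set α), M.Indep I →
    (∀ i < m, z i ∉ I) → (∀ i < m, a i ∈ I) →
    (∀ i < m, ∀ j < m, z i = z j → i = j) → (∀ i < m, ∀ j < m, a i = a j → i = j) →
    (∀ i < m, Circuit M (C i) ∧ C i ⊆ insert (z i) I ∧ z i ∈ C i ∧ a i ∈ C i) →
    (∀ i j, i < j → j < m → a j ∉ C i) →
    M.Indep ((I \ a '' Set.Iio m) ∪ z '' Set.Iio m) ∧
      M.closure ((I \ a '' Set.Iio m) ∪ z '' Set.Iio m) = M.closure I := by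
  intro m
  induction m with
  | zero =>
    intro I z a C hI _ _ _ _ _ _
    have h0 : Set.Iio (0 : ℕ) = ∅ := by ext k; simp
    rw [h0]
    have he : (I \ a '' (∅ : Set ℕ)) ∪ z '' (∅ : Set ℕ) = I := by simp
    rw [he]
    exact ⟨hI, rfl⟩
  | succ m ih =>
    intro I z a C hI hz ha hzinj hainj hC hjump
    have hmm : m < m + 1 := by omega
    obtain ⟨hCm, hCmsub, hzm, ham⟩ := hC m hmm
    obtain ⟨hind1, hcl1⟩ := exchange_single hI hCm hCmsub hzm (hz m hmm) ham (ha m hmm)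
    have key := ih (insert (z m) (I \ {a m})) z a C hind1
      (by
        intro i hi
        rintro (h | ⟨hiI, -⟩)
        · exact absurd (hzinj i (by omega) m hmm h) (by omega)
        · exact hz i (by omega) hiI)
      (by
        intro i hi
        refine Set.mem_insert_of_mem _ ⟨ha i (by omega), ?_⟩
        intro h
        exact absurd (hainj i (by omega) m hmm (by simpa using h)) (by omega))
      (fun i hi j hj h => hzinj i (by omega) j (by omega) h)
      (fun i hi j hj h => hainj i (by omega) j (by omega) h)
      (by
        intro i hi
        obtain ⟨h1, h2, h3, h4⟩ := hC i (by omega)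
        refine ⟨h1, ?_, h3, h4⟩
        intro w hw
        rcases Set.mem_insert_iff.mp (h2 hw) with rfl | hwI
        · exact Set.mem_insert _ _
        · refine Set.mem_insert_of_mem _ (Set.mem_insert_of_mem _ ⟨hwI, ?_⟩)
          intro hwa
          rw [Set.mem_singleton_iff] at hwa
          subst hwa
          exact hjump i m hi hmm hw)
      (fun i j hij hj => hjump i j hij (by omega))
    have hset : (insert (z m) (I \ {a m}) \ a '' Set.Iio m) ∪ z '' Set.Iio m
        = (I \ a '' Set.Iio (m + 1)) ∪ z '' Set.Iio (m + 1) := by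
      have him : Set.Iio (m + 1) = insert m (Set.Iio m) := by
        ext k; simp [Set.mem_Iio, Set.mem_insert_iff]
      rw [him, Set.image_insert_eq, Set.image_insert_eq]
      ext w
      simp only [Set.mem_union, Set.mem_diff, Set.mem_insert_iff, Set.mem_singleton_iff]
      constructor
      · rintro (⟨rfl | ⟨hwI, hwa⟩, hwim⟩ | hwz)
        · exact Or.inr (Or.inl rfl)
        · exact Or.inl ⟨hwI, by tauto⟩
        · exact Or.inr (Or.inr hwz)
      · rintro (⟨hwI, hw2⟩ | rfl | hwz)
        · exact Or.inl ⟨Or.inr ⟨hwI, fun h => hw2 (Or.inl h)⟩, fun h => hw2 (Or.inr h)⟩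
        · refine Or.inl ⟨Or.inl rfl, ?_⟩
          rintro ⟨i, hi, hzi⟩
          exact hz m hmm (hzi ▸ ha i (by simpa using Nat.lt_succ_of_lt hi))
        · exact Or.inr hwz
    rw [hset] at key
    exact ⟨key.1, key.2.trans hcl1⟩

lemma indep_finite_card_le (hS : M.Indep S) (hT : M.Indep T) (hTfin : T.Finite)
    (hST : S ⊆ M.closure T) : S.Finite ∧ S.ncard ≤ T.ncard := by
  obtain ⟨B, hB, hSB⟩ := hS.subset_isBasis_of_subset hST (M.closure_subset_ground T)
  have henc : B.encard = T.encard := hB.encard_eq_encard hT.isBasis_closure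
  have hBfin : B.Finite := by
    rw [← Set.encard_lt_top_iff, henc]
    exact hTfin.encard_lt_top
  have hBT : B.ncard = T.ncard := by
    rw [Set.ncard, Set.ncard, henc]
  exact ⟨hBfin.subset hSB, (Set.ncard_le_ncard hSB hBfin).trans hBT.le⟩

lemma closure_insert_congr {X Y : Set α} (h : M.closure X = M.closure Y) (e : α) :
    M.closure (insert e X) = M.closure (insert e Y) := by
  rw [← M.closure_insert_closure_eq_closure_insert, h,
    M.closure_insert_closure_eq_closure_insert]

lemma arc_cases (h : Arc M N I u v) : (u ∈ M.E \ I ∧ v ∈ I) ∨ (u ∈ I ∧ v ∈ M.E \ I) := by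
  rcases h with ⟨h1, h2, -⟩ | ⟨h1, h2, -⟩
  · exact Or.inl ⟨h1, h2⟩
  · exact Or.inr ⟨h1, h2⟩

lemma chain_mem_iff (f : ℕ → α) (m : ℕ) (harc : ∀ i < m, Arc M N I (f i) (f (i + 1)))
    (h0 : f 0 ∉ I) : ∀ k, k ≤ m → (f k ∈ I ↔ k % 2 = 1) := by
  intro k
  induction k with
  | zero => intro _; simp [h0]
  | succ k ih =>
    intro hk
    have ihk := ih (by omega)
    rcases arc_cases (harc k (by omega)) with ⟨⟨-, hu⟩, hv⟩ | ⟨hu, -, hv⟩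
    · have : ¬ (k % 2 = 1) := fun h => hu (ihk.mpr h)
      simp only [hv, true_iff]
      omega
    · have : k % 2 = 1 := ihk.mp hu
      simp only [hv, false_iff]
      omega

lemma symmdiff_eq_aux (f : ℕ → α) (n : ℕ) (I : Set α)
    (hmem : ∀ k, k ≤ 2 * n → (f k ∈ I ↔ k % 2 = 1)) (s : ℕ) (hs : s ≤ 2 * n)
    (hse : s % 2 = 0) :
    I ∆ (f '' Set.Iic (2 * n)) =
      insert (f s) ((I \ (f '' {k | k ≤ 2 * n ∧ k % 2 = 1})) ∪
        (f '' {k | k ≤ 2 * n ∧ k % 2 = 0 ∧ k ≠ s})) := by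
  ext w
  simp only [Set.mem_symmDiff, Set.mem_insert_iff, Set.mem_union, Set.mem_diff,
    Set.mem_image, Set.mem_Iic, Set.mem_setOf_eq]
  constructor
  · rintro (⟨hwI, hwP⟩ | ⟨⟨k, hk, rfl⟩, hwI⟩)
    · refine Or.inr (Or.inl ⟨hwI, ?_⟩)
      rintro ⟨k, ⟨hk, -⟩, rfl⟩
      exact hwP ⟨k, hk, rfl⟩
    · have hk0 : k % 2 = 0 := by
        rcases Nat.mod_two_eq_zero_or_one k with h | h
        · exact h
        · exact absurd ((hmem k hk).mpr h) hwI
      by_cases hks : k = s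
      · exact Or.inl (by rw [hks])
      · exact Or.inr (Or.inr ⟨k, ⟨hk, hk0, hks⟩, rfl⟩)
  · rintro (rfl | ⟨hwI, hwOd⟩ | ⟨k, ⟨hk, hk0, hks⟩, rfl⟩)
    · refine Or.inr ⟨⟨s, hs, rfl⟩, fun h => ?_⟩
      have := (hmem s hs).mp h
      omega
    · refine Or.inl ⟨hwI, ?_⟩
      rintro ⟨k, hk, rfl⟩
      exact hwOd ⟨k, ⟨hk, (hmem k hk).mp hwI⟩, rfl⟩
    · refine Or.inr ⟨⟨k, hk, rfl⟩, fun h => ?_⟩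
      have := (hmem k hk).mp h
      omega

lemma image_double (n : ℕ) :
    (fun k => 2 * k) '' Set.Iio n = {k | k ≤ 2 * n ∧ k % 2 = 0 ∧ k ≠ 2 * n} := by
  ext m
  simp only [Set.mem_image, Set.mem_Iio, Set.mem_setOf_eq]
  constructor
  · rintro ⟨j, hj, rfl⟩; omega
  · rintro ⟨h1, h2, h3⟩; exact ⟨m / 2, by omega, by omega⟩

lemma image_double_succ (n : ℕ) :
    (fun k => 2 * k + 1) '' Set.Iio n = {k | k ≤ 2 * n ∧ k % 2 = 1} := by
  ext m
  simp only [Set.mem_image, Set.mem_Iio, Set.mem_setOf_eq]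
  constructor
  · rintro ⟨j, hj, rfl⟩; omega
  · rintro ⟨h1, h2⟩; exact ⟨m / 2, by omega, by omega⟩

lemma image_rev_even (n : ℕ) :
    (fun k => 2 * n - 2 * k) '' Set.Iio n = {k | k ≤ 2 * n ∧ k % 2 = 0 ∧ k ≠ 0} := by
  ext m
  simp only [Set.mem_image, Set.mem_Iio, Set.mem_setOf_eq]
  constructor
  · rintro ⟨j, hj, rfl⟩; omega
  · rintro ⟨h1, h2, h3⟩; exact ⟨(2 * n - m) / 2, by omega, by omega⟩

lemma image_rev_odd (n : ℕ) :
    (fun k => 2 * n - (2 * k + 1)) '' Set.Iio n = {k | k ≤ 2 * n ∧ k % 2 = 1} := by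
  ext m
  simp only [Set.mem_image, Set.mem_Iio, Set.mem_setOf_eq]
  constructor
  · rintro ⟨j, hj, rfl⟩; omega
  · rintro ⟨h1, h2⟩; exact ⟨(2 * n - 1 - m) / 2, by omega, by omega⟩

end Aux
section Aux2

variable {M N : Matroid α} {I J K P C : Set α} {x y : α}

lemma aug_exchange (hE : M.E = N.E) (hIM : M.Indep I) (hIN : N.Indep I)
    (hP : IsAugPath M N I P x y) :
    M.Indep (I ∆ P) ∧ N.Indep (I ∆ P) ∧
      M.closure (I ∆ P) = M.closure (insert y I) ∧
      N.closure (I ∆ P) = N.closure (insert x I) ∧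
      x ∈ I ∆ P ∧ y ∈ I ∆ P ∧
      (I ∆ P) \ {y} ⊆ M.closure I ∧ (I ∆ P) \ {x} ⊆ N.closure I := by
  obtain ⟨n, f, hPeq, hPE, hinj, hf0, hf2n, hxcl, hycl, harc, hjump⟩ := hP
  subst hf0 hf2n hPeq
  have hIME := hIM.subset_ground
  have hINE := hIN.subset_ground
  have h0I : f 0 ∉ I := fun h => hxcl (N.subset_closure I hINE h)
  have hmem := chain_mem_iff f (2 * n) harc h0I
  -- M-side arc data
  have harcM : ∀ k, k < n → f (2 * k) ∈ M.E \ I ∧ f (2 * k) ∈ M.closure I ∧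
      ∃ C, Circuit M C ∧ C ⊆ insert (f (2 * k)) I ∧ f (2 * k) ∈ C ∧ f (2 * k + 1) ∈ C := by
    intro k hk
    rcases harc (2 * k) (by omega) with ⟨h1, h2, h3, hC⟩ | ⟨h1, -⟩
    · exact ⟨h1, h3, hC⟩
    · have := (hmem (2 * k) (by omega)).mp h1
      omega
  -- N-side arc data (reversed indexing)
  have harcN : ∀ k, k < n → f (2 * n - 2 * k) ∈ M.E \ I ∧ f (2 * n - 2 * k) ∈ N.closure I ∧
      ∃ C, Circuit N C ∧ C ⊆ insert (f (2 * n - 2 * k)) I ∧ f (2 * n - 2 * k) ∈ C ∧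
        f (2 * n - (2 * k + 1)) ∈ C := by
    intro k hk
    have e1 : 2 * n - (2 * k + 1) + 1 = 2 * n - 2 * k := by omega
    rcases harc (2 * n - (2 * k + 1)) (by omega) with ⟨h1, -⟩ | ⟨h1, h2, h3, hC⟩
    · have := (hmem (2 * n - (2 * k + 1)) (by omega)).mpr (by omega)
      exact absurd this h1.2
    · rw [e1] at h2 h3 hC
      exact ⟨h2, h3, hC⟩
  -- choose circuits
  have hCMex : ∀ k : ℕ, ∃ C, k < n → Circuit M C ∧ C ⊆ insert (f (2 * k)) I ∧
      f (2 * k) ∈ C ∧ f (2 * k + 1) ∈ C := by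
    intro k
    by_cases hk : k < n
    · obtain ⟨-, -, C, hC⟩ := harcM k hk
      exact ⟨C, fun _ => hC⟩
    · exact ⟨∅, fun h => absurd h hk⟩
  choose CM hCM using hCMex
  have hCNex : ∀ k : ℕ, ∃ C, k < n → Circuit N C ∧ C ⊆ insert (f (2 * n - 2 * k)) I ∧
      f (2 * n - 2 * k) ∈ C ∧ f (2 * n - (2 * k + 1)) ∈ C := by
    intro k
    by_cases hk : k < n
    · obtain ⟨-, -, C, hC⟩ := harcN k hk
      exact ⟨C, fun _ => hC⟩
    · exact ⟨∅, fun h => absurd h hk⟩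
  choose CN hCN using hCNex
  -- M-side triangular exchange
  have triM := tri_exchange M n I (fun k => f (2 * k)) (fun k => f (2 * k + 1)) CM hIM
    (fun i hi h => by have := (hmem (2 * i) (by omega)).mp h; omega)
    (fun i hi => (hmem (2 * i + 1) (by omega)).mpr (by omega))
    (fun i hi j hj h => by
      have := hinj (Set.mem_Iic.mpr (by omega : 2 * i ≤ 2 * n))
        (Set.mem_Iic.mpr (by omega : 2 * j ≤ 2 * n)) h
      omega)
    (fun i hi j hj h => by
      have := hinj (Set.mem_Iic.mpr (by omega : 2 * i + 1 ≤ 2 * n))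
        (Set.mem_Iic.mpr (by omega : 2 * j + 1 ≤ 2 * n)) h
      omega)
    (fun i hi => hCM i hi)
    (by
      intro i j hij hj hmemC
      refine hjump (2 * i) (2 * j + 1) (by omega) (by omega) ?_
      obtain ⟨hc1, hc2, hc3, hc4⟩ := hCM i (by omega)
      exact Or.inl ⟨(harcM i (by omega)).1, (hmem (2 * j + 1) (by omega)).mpr (by omega),
        (harcM i (by omega)).2.1, CM i, hc1, hc2, hc3, hmemC⟩)
  -- N-side triangular exchange
  have triN := tri_exchange N n I (fun k => f (2 * n - 2 * k))
    (fun k => f (2 * n - (2 * k + 1))) CN hIN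
    (fun i hi h => by have := (hmem (2 * n - 2 * i) (by omega)).mp h; omega)
    (fun i hi => (hmem (2 * n - (2 * i + 1)) (by omega)).mpr (by omega))
    (fun i hi j hj h => by
      have := hinj (Set.mem_Iic.mpr (by omega : 2 * n - 2 * i ≤ 2 * n))
        (Set.mem_Iic.mpr (by omega : 2 * n - 2 * j ≤ 2 * n)) h
      omega)
    (fun i hi j hj h => by
      have := hinj (Set.mem_Iic.mpr (by omega : 2 * n - (2 * i + 1) ≤ 2 * n))
        (Set.mem_Iic.mpr (by omega : 2 * n - (2 * j + 1) ≤ 2 * n)) h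
      omega)
    (fun i hi => hCN i hi)
    (by
      intro i j hij hj hmemC
      refine hjump (2 * n - (2 * j + 1)) (2 * n - 2 * i) (by omega) (by omega) ?_
      obtain ⟨hc1, hc2, hc3, hc4⟩ := hCN i (by omega)
      exact Or.inr ⟨(hmem (2 * n - (2 * j + 1)) (by omega)).mpr (by omega),
        (harcN i (by omega)).1, (harcN i (by omega)).2.1, CN i, hc1, hc2, hc3, hmemC⟩)
  -- rewrite image sets
  have himOdd : (fun k => f (2 * k + 1)) '' Set.Iio n
      = f '' {k | k ≤ 2 * n ∧ k % 2 = 1} := by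
    rw [show (fun k => f (2 * k + 1)) = f ∘ (fun k => 2 * k + 1) from rfl, Set.image_comp,
      image_double_succ]
  have himEvM : (fun k => f (2 * k)) '' Set.Iio n
      = f '' {k | k ≤ 2 * n ∧ k % 2 = 0 ∧ k ≠ 2 * n} := by
    rw [show (fun k => f (2 * k)) = f ∘ (fun k => 2 * k) from rfl, Set.image_comp, image_double]
  have himOdd' : (fun k => f (2 * n - (2 * k + 1))) '' Set.Iio n
      = f '' {k | k ≤ 2 * n ∧ k % 2 = 1} := by
    rw [show (fun k => f (2 * n - (2 * k + 1))) = f ∘ (fun k => 2 * n - (2 * k + 1)) from rfl,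
      Set.image_comp, image_rev_odd]
  have himEvN : (fun k => f (2 * n - 2 * k)) '' Set.Iio n
      = f '' {k | k ≤ 2 * n ∧ k % 2 = 0 ∧ k ≠ 0} := by
    rw [show (fun k => f (2 * n - 2 * k)) = f ∘ (fun k => 2 * n - 2 * k) from rfl,
      Set.image_comp, image_rev_even]
  rw [himOdd, himEvM] at triM
  rw [himOdd', himEvN] at triN
  have hsdM := symmdiff_eq_aux f n I hmem (2 * n) le_rfl (by omega)
  have hsdN := symmdiff_eq_aux f n I hmem 0 (by omega) (by omega)
  have hyE : f (2 * n) ∈ M.E := hPE ⟨2 * n, Set.mem_Iic.mpr le_rfl, rfl⟩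
  have hxE : f 0 ∈ M.E := hPE ⟨0, Set.mem_Iic.mpr (by omega), rfl⟩
  have hySM : f (2 * n) ∉ (I \ f '' {k | k ≤ 2 * n ∧ k % 2 = 1}) ∪
      f '' {k | k ≤ 2 * n ∧ k % 2 = 0 ∧ k ≠ 2 * n} := by
    intro h
    refine hycl ?_
    rw [← triM.2]
    exact M.subset_closure _ triM.1.subset_ground h
  have hxSN : f 0 ∉ (I \ f '' {k | k ≤ 2 * n ∧ k % 2 = 1}) ∪
      f '' {k | k ≤ 2 * n ∧ k % 2 = 0 ∧ k ≠ 0} := by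
    intro h
    refine hxcl ?_
    rw [← triN.2]
    exact N.subset_closure _ triN.1.subset_ground h
  have hMind : M.Indep (I ∆ (f '' Set.Iic (2 * n))) := by
    rw [hsdM]
    exact (triM.1.insert_indep_iff_of_notMem hySM).mpr ⟨hyE, by rw [triM.2]; exact hycl⟩
  have hNind : N.Indep (I ∆ (f '' Set.Iic (2 * n))) := by
    rw [hsdN]
    exact (triN.1.insert_indep_iff_of_notMem hxSN).mpr ⟨hE ▸ hxE, by rw [triN.2]; exact hxcl⟩
  have hMcl : M.closure (I ∆ (f '' Set.Iic (2 * n))) = M.closure (insert (f (2 * n)) I) := by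
    rw [hsdM, ← M.closure_insert_closure_eq_closure_insert, triM.2,
      M.closure_insert_closure_eq_closure_insert]
  have hNcl : N.closure (I ∆ (f '' Set.Iic (2 * n))) = N.closure (insert (f 0) I) := by
    rw [hsdN, ← N.closure_insert_closure_eq_closure_insert, triN.2,
      N.closure_insert_closure_eq_closure_insert]
  refine ⟨hMind, hNind, hMcl, hNcl, ?_, ?_, ?_, ?_⟩
  · rw [hsdN]; exact Set.mem_insert _ _
  · rw [hsdM]; exact Set.mem_insert _ _
  · rw [hsdM]
    rintro w ⟨hw, hwne⟩
    rcases Set.mem_insert_iff.mp hw with rfl | hw'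
    · exact absurd rfl hwne
    rcases hw' with ⟨hwI, -⟩ | ⟨k, ⟨hk, hk0, hkne⟩, rfl⟩
    · exact M.subset_closure I hIME hwI
    · have hfk : f k = f (2 * (k / 2)) := by congr 1; omega
      rw [hfk]
      exact (harcM (k / 2) (by omega)).2.1
  · rw [hsdN]
    rintro w ⟨hw, hwne⟩
    rcases Set.mem_insert_iff.mp hw with rfl | hw'
    · exact absurd rfl hwne
    rcases hw' with ⟨hwI, -⟩ | ⟨k, ⟨hk, hk0, hkne⟩, rfl⟩
    · exact N.subset_closure I hINE hwI
    · have hfk : f k = f (2 * n - 2 * ((2 * n - k) / 2)) := by congr 1; omega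
      rw [hfk]
      exact (harcN ((2 * n - k) / 2) (by omega)).2.1

end Aux2
section Aux3

variable {M N : Matroid α} {I J K P C : Set α} {x y : α}

lemma exists_matching (hJ : M.Indep J) (hJfin : J.Finite) (hK : M.Indep K)
    (hKfin : K.Finite) (hKcl : K \ {y} ⊆ M.closure J) (hJcl : J ⊆ M.closure K)
    (hyK : y ∈ K) (hy : y ∉ M.closure J) :
    ∃ m : α → α, Set.InjOn m (K \ (J ∪ {y})) ∧ m '' (K \ (J ∪ {y})) = J \ K ∧
      ∀ z ∈ K \ (J ∪ {y}), ∃ C, Circuit M C ∧ C ⊆ insert z J ∧ z ∈ C ∧ m z ∈ C := by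
  classical
  have hJE := hJ.subset_ground
  have hKE := hK.subset_ground
  have hyJ : y ∉ J := fun h => hy (M.subset_closure J hJE h)
  have hcirc : ∀ z : (K \ (J ∪ {y}) : Set α),
      ∃ C, Circuit M C ∧ C ⊆ insert (z : α) J ∧ (z : α) ∈ C := by
    rintro ⟨z, hzK, hz2⟩
    exact exists_fund_circuit hJ hJfin (hKcl ⟨hzK, fun h => hz2 (Or.inr h)⟩)
      (fun h => hz2 (Or.inl h))
  choose Cz hCz1 hCz2 hCz3 using hcirc
  have hDfin : (K \ (J ∪ {y})).Finite := hKfin.subset Set.diff_subset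
  have hJKfin : (J \ K).Finite := hJfin.subset Set.diff_subset
  have htfin : ∀ z : (K \ (J ∪ {y}) : Set α), ((Cz z \ {(z : α)}) ∩ (J \ K)).Finite :=
    fun z => hJKfin.subset Set.inter_subset_right
  have hall : ∀ s : Finset (K \ (J ∪ {y}) : Set α),
      s.card ≤ (s.biUnion fun z => (htfin z).toFinset).card := by
    intro s
    set S : Set α := ↑(s.image Subtype.val) with hS
    set B : Set α := ↑(s.biUnion fun z => (htfin z).toFinset) with hB
    have hSsub : S ⊆ K \ (J ∪ {y}) := by
      rintro w hw
      simp only [hS, Finset.coe_image, Set.mem_image, Finset.mem_coe] at hw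
      obtain ⟨z, -, rfl⟩ := hw
      exact z.2
    have hBsub : B ⊆ J \ K := by
      intro w hw
      simp only [hB, Finset.coe_biUnion, Set.mem_iUnion, Finset.mem_coe,
        Set.Finite.mem_toFinset, Finset.mem_biUnion] at hw
      obtain ⟨z, -, hz⟩ := hw
      exact hz.2
    have hTE : B ∪ (K ∩ J) ⊆ M.E := Set.union_subset ((hBsub.trans Set.diff_subset).trans hJE)
      ((Set.inter_subset_right).trans hJE)
    have hsubcl : S ∪ (K ∩ J) ⊆ M.closure (B ∪ (K ∩ J)) := by
      apply Set.union_subset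
      · rintro w hw
        simp only [hS, Finset.coe_image, Set.mem_image, Finset.mem_coe] at hw
        obtain ⟨z, hzs, rfl⟩ := hw
        have h1 : (z : α) ∈ M.closure (Cz z \ {(z : α)}) :=
          circuit_mem_closure_diff (hCz1 z) (hCz3 z)
        refine M.closure_subset_closure ?_ h1
        intro c hc
        have hcJ : c ∈ J := by
          rcases Set.mem_insert_iff.mp (hCz2 z hc.1) with h4 | h4
          · exact absurd h4 (by simpa using hc.2)
          · exact h4
        by_cases hcK : c ∈ K
        · exact Or.inr ⟨hcK, hcJ⟩
        · refine Or.inl ?_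
          simp only [hB, Finset.coe_biUnion, Set.mem_iUnion, Finset.mem_coe]
          exact ⟨z, hzs, by rw [Set.Finite.mem_toFinset]; exact ⟨hc, hcJ, hcK⟩⟩
      · exact (Set.subset_union_right).trans (M.subset_closure _ hTE)
    have hSKind : M.Indep (S ∪ (K ∩ J)) :=
      hK.subset (Set.union_subset (hSsub.trans Set.diff_subset) Set.inter_subset_left)
    have hTind : M.Indep (B ∪ (K ∩ J)) :=
      hJ.subset (Set.union_subset (hBsub.trans Set.diff_subset) Set.inter_subset_right)
    have hTfin : (B ∪ (K ∩ J)).Finite :=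
      ((hJKfin.subset hBsub).union (hKfin.subset Set.inter_subset_left))
    obtain ⟨-, hle⟩ := indep_finite_card_le hSKind hTind hTfin hsubcl
    have hd1 : Disjoint S (K ∩ J) := Set.disjoint_left.mpr
      (fun w hwS hwKJ => (hSsub hwS).2 (Or.inl hwKJ.2))
    have hd2 : Disjoint B (K ∩ J) := Set.disjoint_left.mpr
      (fun w hwB hwKJ => (hBsub hwB).2 hwKJ.1)
    have hSfin : S.Finite := (s.image Subtype.val).finite_toSet
    have hBfin : B.Finite := (s.biUnion fun z => (htfin z).toFinset).finite_toSet
    have hKJfin : (K ∩ J).Finite := hKfin.subset Set.inter_subset_left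
    have e1 : (S ∪ (K ∩ J)).ncard = S.ncard + (K ∩ J).ncard :=
      Set.ncard_union_eq hd1 hSfin hKJfin
    have e2 : (B ∪ (K ∩ J)).ncard = B.ncard + (K ∩ J).ncard :=
      Set.ncard_union_eq hd2 hBfin hKJfin
    have e3 : S.ncard = s.card := by
      rw [hS, Set.ncard_coe_finset, Finset.card_image_of_injective _ Subtype.val_injective]
    have e4 : B.ncard = (s.biUnion fun z => (htfin z).toFinset).card := by
      rw [hB, Set.ncard_coe_finset]
    omega
  obtain ⟨F, hFinj, hFmem⟩ :=
    (Finset.all_card_le_biUnion_card_iff_exists_injective fun z => (htfin z).toFinset).mp hall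
  set m : α → α := fun w => if h : w ∈ K \ (J ∪ {y}) then F ⟨w, h⟩ else w with hm
  have hminj : Set.InjOn m (K \ (J ∪ {y})) := by
    intro u hu v hv huv
    simp only [hm, dif_pos hu, dif_pos hv] at huv
    exact congrArg Subtype.val (hFinj huv)
  have hmmem : ∀ w (h : w ∈ K \ (J ∪ {y})),
      m w ∈ (Cz ⟨w, h⟩ \ {w}) ∩ (J \ K) := by
    intro w h
    have h2 := hFmem ⟨w, h⟩
    rw [Set.Finite.mem_toFinset] at h2
    have hmw : m w = F ⟨w, h⟩ := dif_pos h
    rw [hmw]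
    exact h2
  have hmsub : m '' (K \ (J ∪ {y})) ⊆ J \ K := by
    rintro _ ⟨w, hw, rfl⟩
    exact (hmmem w hw).2
  have hcard1 : J.ncard + 1 ≤ K.ncard := by
    have hins : M.Indep (insert y J) :=
      (hJ.insert_indep_iff_of_notMem hyJ).mpr ⟨hKE hyK, hy⟩
    have hsub : insert y J ⊆ M.closure K :=
      Set.insert_subset (M.subset_closure K hKE hyK) hJcl
    obtain ⟨-, hle⟩ := indep_finite_card_le hins hK hKfin hsub
    rw [Set.ncard_insert_of_notMem hyJ hJfin] at hle
    exact hle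
  have hDcard : (J \ K).ncard ≤ (K \ (J ∪ {y})).ncard := by
    have e1 : (K \ J).ncard + (K ∩ J).ncard = K.ncard := by
      rw [← Set.ncard_inter_add_ncard_diff_eq_ncard K J hKfin]
      ring
    have e2 : (J \ K).ncard + (J ∩ K).ncard = J.ncard := by
      rw [← Set.ncard_inter_add_ncard_diff_eq_ncard J K hJfin]
      ring
    have e3 : K \ (J ∪ {y}) = (K \ J) \ {y} := by
      rw [Set.diff_diff]
    have e4 : (K \ (J ∪ {y})).ncard = (K \ J).ncard - 1 := by
      rw [e3, Set.ncard_diff_singleton_of_mem (show y ∈ K \ J from ⟨hyK, hyJ⟩)]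
    have e5 : (J ∩ K).ncard = (K ∩ J).ncard := by rw [Set.inter_comm]
    have e6 : 0 < (K \ J).ncard :=
      (Set.ncard_pos hKfin.diff).mpr ⟨y, hyK, hyJ⟩
    omega
  have himg : m '' (K \ (J ∪ {y})) = J \ K := by
    apply Set.eq_of_subset_of_ncard_le hmsub _ hJKfin
    rw [Set.ncard_image_of_injOn hminj]
    exact hDcard
  refine ⟨m, hminj, himg, ?_⟩
  intro z hz
  exact ⟨Cz ⟨z, hz⟩, hCz1 _, hCz2 _, hCz3 _, (hmmem z hz).1.1⟩

end Aux3
section Aux4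

variable {M N : Matroid α} {I J K P C : Set α} {x y : α}

lemma reach_of_witness (hE : M.E = N.E) (hJM : M.Indep J) (hJN : N.Indep J)
    (hJfin : J.Finite) (hKM : M.Indep K) (hKN : N.Indep K) (hKfin : K.Finite)
    (hxK : x ∈ K) (hyK : y ∈ K) (hxy : x ≠ y)
    (hx : x ∉ N.closure J) (hy : y ∉ M.closure J)
    (hKMcl : K \ {y} ⊆ M.closure J) (hKNcl : K \ {x} ⊆ N.closure J)
    (hJMK : J ⊆ M.closure K) (hJNK : J ⊆ N.closure K) :
    Relation.ReflTransGen (Arc M N J) x y := by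
  classical
  haveI : Nonempty α := ⟨x⟩
  obtain ⟨mM, hMinj, hMimg, hMC⟩ := exists_matching hJM hJfin hKM hKfin hKMcl hJMK hyK hy
  obtain ⟨mN, hNinj, hNimg, hNC⟩ :=
    exists_matching (M := N) hJN hJfin hKN hKfin hKNcl hJNK hxK hx
  set DM := K \ (J ∪ {y}) with hDM
  set DN := K \ (J ∪ {x}) with hDN
  set ν : α → α := Function.invFunOn mN DN with hν0
  have hν : ∀ a ∈ J \ K, ν a ∈ DN ∧ mN (ν a) = a := by
    intro a ha
    rw [← hNimg] at ha
    obtain ⟨w, hw, hwa⟩ := ha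
    exact ⟨Function.invFunOn_mem ⟨w, hw, hwa⟩, Function.invFunOn_eq ⟨w, hw, hwa⟩⟩
  have hxJ : x ∉ J := fun h => hx (N.subset_closure J hJN.subset_ground h)
  have hxDM : x ∈ DM := by
    refine ⟨hxK, ?_⟩
    rintro (h | h)
    · exact hxJ h
    · exact hxy (by simpa using h)
  set g : ℕ → α := fun k => Nat.rec x (fun _ w => if w = y then y else ν (mM w)) k with hg
  have hg0 : g 0 = x := rfl
  have hgs : ∀ k, g (k + 1) = if g k = y then y else ν (mM (g k)) := fun k => rfl
  have hinv : ∀ k, g k = y ∨ (g k ∈ DM ∧ (k = 0 ∨ g k ∈ DN)) := by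
    intro k
    induction k with
    | zero => exact Or.inr ⟨hxDM, Or.inl rfl⟩
    | succ k ih =>
      by_cases hky : g k = y
      · left; rw [hgs k, if_pos hky]
      · rcases ih with h | ⟨hDM', -⟩
        · exact absurd h hky
        have hmm : mM (g k) ∈ J \ K := by
          rw [← hMimg]; exact ⟨g k, hDM', rfl⟩
        obtain ⟨hνD, hνeq⟩ := hν _ hmm
        have hgk1 : g (k + 1) = ν (mM (g k)) := by rw [hgs k, if_neg hky]
        by_cases hyy : g (k + 1) = y
        · exact Or.inl hyy
        · refine Or.inr ⟨⟨(hgk1 ▸ hνD).1, ?_⟩, Or.inr (hgk1 ▸ hνD)⟩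
          rintro (h | h)
          · exact (hgk1 ▸ hνD).2 (Or.inl h)
          · exact hyy (by simpa using h)
  have hrtg : ∀ k, Relation.ReflTransGen (Arc M N J) x (g k) := by
    intro k
    induction k with
    | zero => exact .refl
    | succ k ih =>
      by_cases hky : g k = y
      · rw [hgs k, if_pos hky, ← hky]; exact ih
      · rcases hinv k with h | ⟨hDM', -⟩
        · exact absurd h hky
        have hgkJ : g k ∉ J := fun h => hDM'.2 (Or.inl h)
        have hmm : mM (g k) ∈ J \ K := by
          rw [← hMimg]; exact ⟨g k, hDM', rfl⟩
        obtain ⟨hνD, hνeq⟩ := hν _ hmm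
        obtain ⟨C1, hC11, hC12, hC13, hC14⟩ := hMC _ hDM'
        have harc1 : Arc M N J (g k) (mM (g k)) :=
          Or.inl ⟨⟨hKM.subset_ground hDM'.1, hgkJ⟩, hmm.1,
            hKMcl ⟨hDM'.1, fun hh => hDM'.2 (Or.inr hh)⟩, C1, hC11, hC12, hC13, hC14⟩
        obtain ⟨C2, hC21, hC22, hC23, hC24⟩ := hNC _ hνD
        have harc2 : Arc M N J (mM (g k)) (ν (mM (g k))) := by
          refine Or.inr ⟨hmm.1, ⟨hKM.subset_ground hνD.1, fun h => hνD.2 (Or.inl h)⟩,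
            hKNcl ⟨hνD.1, fun h => hνD.2 (Or.inr h)⟩, C2, hC21, hC22, hC23, ?_⟩
          rw [← hνeq]; exact hC24
        rw [hgs k, if_neg hky]
        exact (ih.tail harc1).tail harc2
  have hterm : ∃ k, g k = y := by
    by_contra hno
    push_neg at hno
    have hgm : ∀ k, g k ∈ DM := fun k => ((hinv k).resolve_left (hno k)).1
    have hstep : ∀ k, g (k + 1) = ν (mM (g k)) := fun k => by rw [hgs k, if_neg (hno k)]
    have himgk : ∀ k, mM (g k) ∈ J \ K := by
      intro k
      rw [← hMimg]; exact ⟨g k, hgm k, rfl⟩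
    have hback : ∀ i j, g (i + 1) = g (j + 1) → g i = g j := by
      intro i j hgij
      rw [hstep i, hstep j] at hgij
      have e1 := (hν _ (himgk i)).2
      have e2 := (hν _ (himgk j)).2
      have : mM (g i) = mM (g j) := by rw [← e1, ← e2, hgij]
      exact hMinj (hgm i) (hgm j) this
    have hne0 : ∀ j, g (j + 1) ≠ x := by
      intro j h
      have h2 := (hν _ (himgk j)).1
      rw [← hstep j, h] at h2
      exact h2.2 (Or.inr rfl)
    have hginj : ∀ j, ∀ i < j, g i ≠ g j := by
      intro j
      induction j with
      | zero => intro i hi; omega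
      | succ j ih =>
        intro i hi heq
        cases i with
        | zero => exact hne0 j (by rw [← heq, hg0])
        | succ i => exact ih i (by omega) (hback i j heq)
    have hinjOn : Set.InjOn g (Set.Iic (J.ncard + 1)) := by
      intro i hi j hj hij
      rcases lt_trichotomy i j with h | h | h
      · exact absurd hij (hginj j i h)
      · exact h
      · exact absurd hij.symm (hginj i j h)
    have hDMfin : DM.Finite := hKfin.subset Set.diff_subset
    have hc1 : (g '' Set.Iic (J.ncard + 1)).ncard = J.ncard + 2 := by
      rw [Set.ncard_image_of_injOn hinjOn, ← Finset.coe_Iic, Set.ncard_coe_finset,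
        Nat.card_Iic]
    have hc2 : (g '' Set.Iic (J.ncard + 1)).ncard ≤ DM.ncard := by
      refine Set.ncard_le_ncard ?_ hDMfin
      rintro w ⟨k, -, hk⟩
      exact hk ▸ hgm k
    have hc3 : DM.ncard ≤ J.ncard := by
      rw [← Set.ncard_image_of_injOn hMinj, hMimg]
      exact Set.ncard_le_ncard Set.diff_subset hJfin
    omega
  obtain ⟨k, hk⟩ := hterm
  rw [← hk]
  exact hrtg k

end Aux4
section Aux5

variable {M N : Matroid α} {I J K P C : Set α} {x y : α}

lemma augpath_of_rtg (hE : M.E = N.E) (hJM : M.Indep J) (hJN : N.Indep J)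
    (hxE : x ∈ M.E) (hx : x ∉ N.closure J) (hy : y ∉ M.closure J)
    (h : Relation.ReflTransGen (Arc M N J) x y) :
    ∃ Q, IsAugPath M N J Q x y := by
  classical
  have key : ∀ b, Relation.ReflTransGen (Arc M N J) x b →
      ∃ n, ∃ f : ℕ → α, f 0 = x ∧ f n = b ∧ ∀ i < n, Arc M N J (f i) (f (i + 1)) := by
    intro b hb
    induction hb with
    | refl => exact ⟨0, fun _ => x, rfl, rfl, by intro i hi; omega⟩
    | @tail b c hab hbc ih =>
      obtain ⟨n, f, hf0, hfn, harc⟩ := ih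
      refine ⟨n + 1, fun k => if k ≤ n then f k else c,
        by beta_reduce; rw [if_pos (by omega)]; exact hf0,
        by beta_reduce; rw [if_neg (by omega)], ?_⟩
      intro i hi
      beta_reduce
      rcases Nat.lt_succ_iff_lt_or_eq.mp hi with hi' | rfl
      · rw [if_pos (by omega : i ≤ n), if_pos (by omega : i + 1 ≤ n)]
        exact harc i hi'
      · rw [if_pos (le_rfl : i ≤ i), if_neg (by omega : ¬ i + 1 ≤ i), hfn]
        exact hbc
  have hex : ∃ n, ∃ f : ℕ → α, f 0 = x ∧ f n = y ∧ ∀ i < n, Arc M N J (f i) (f (i + 1)) :=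
    key y h
  obtain ⟨n₀, hspec, hmin⟩ : ∃ n₀, (∃ f : ℕ → α, f 0 = x ∧ f n₀ = y ∧
      ∀ i < n₀, Arc M N J (f i) (f (i + 1))) ∧ ∀ m, m < n₀ →
      ¬ (∃ f : ℕ → α, f 0 = x ∧ f m = y ∧ ∀ i < m, Arc M N J (f i) (f (i + 1))) := by
    haveI : DecidablePred fun n => ∃ f : ℕ → α, f 0 = x ∧ f n = y ∧
        ∀ i < n, Arc M N J (f i) (f (i + 1)) := fun _ => Classical.dec _
    exact ⟨Nat.find hex, Nat.find_spec hex, fun m hm => Nat.find_min hex hm⟩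
  obtain ⟨f, hf0, hfn, harc⟩ := hspec
  have hnojump : ∀ i j, i + 1 < j → j ≤ n₀ → ¬ Arc M N J (f i) (f j) := by
    intro i j hij hjn harcij
    refine hmin (n₀ - (j - i - 1)) (by omega) ?_
    refine ⟨fun k => if k ≤ i then f k else f (k + (j - i - 1)),
      by beta_reduce; rw [if_pos (by omega : (0:ℕ) ≤ i)]; exact hf0, ?_, ?_⟩
    · beta_reduce
      rw [if_neg (by omega : ¬ n₀ - (j - i - 1) ≤ i),
        show n₀ - (j - i - 1) + (j - i - 1) = n₀ by omega]
      exact hfn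
    · intro k hk
      beta_reduce
      by_cases h1 : k + 1 ≤ i
      · rw [if_pos (by omega : k ≤ i), if_pos h1]
        exact harc k (by omega)
      · by_cases h2 : k ≤ i
        · have hki : k = i := by omega
          rw [if_pos h2, if_neg (by omega : ¬ k + 1 ≤ i), hki,
            show i + 1 + (j - i - 1) = j by omega]
          exact harcij
        · rw [if_neg h2, if_neg (by omega : ¬ k + 1 ≤ i),
            show k + 1 + (j - i - 1) = k + (j - i - 1) + 1 by omega]
          exact harc (k + (j - i - 1)) (by omega)
  have haux : ∀ i j, i < j → j ≤ n₀ → f i = f j → False := by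
    intro i j hlt hjn heq
    by_cases hjn' : j = n₀
    · subst hjn'
      exact hmin i (by omega) ⟨f, hf0, heq.trans hfn, fun k hk => harc k (by omega)⟩
    · refine hmin (n₀ - (j - i)) (by omega) ?_
      refine ⟨fun k => if k ≤ i then f k else f (k + (j - i)),
        by beta_reduce; rw [if_pos (by omega : (0:ℕ) ≤ i)]; exact hf0, ?_, ?_⟩
      · beta_reduce
        rw [if_neg (by omega : ¬ n₀ - (j - i) ≤ i),
          show n₀ - (j - i) + (j - i) = n₀ by omega]
        exact hfn
      · intro k hk
        beta_reduce
        by_cases h1 : k + 1 ≤ i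
        · rw [if_pos (by omega : k ≤ i), if_pos h1]
          exact harc k (by omega)
        · by_cases h2 : k ≤ i
          · have hki : k = i := by omega
            rw [if_pos h2, if_neg (by omega : ¬ k + 1 ≤ i), hki,
              show i + 1 + (j - i) = j + 1 by omega, heq]
            exact harc j (by omega)
          · rw [if_neg h2, if_neg (by omega : ¬ k + 1 ≤ i),
              show k + 1 + (j - i) = k + (j - i) + 1 by omega]
            exact harc (k + (j - i)) (by omega)
  have hinj : Set.InjOn f (Set.Iic n₀) := by
    intro i hi j hj hij
    rcases lt_trichotomy i j with hlt | hlt | hlt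
    · exact absurd hij (fun hh => haux i j hlt hj hh)
    · exact hlt
    · exact absurd hij.symm (fun hh => haux j i hlt hi hh)
  have h0J : f 0 ∉ J := by
    rw [hf0]
    exact fun h => hx (N.subset_closure J hJN.subset_ground h)
  have hmemJ := chain_mem_iff f n₀ harc h0J
  have hnye : n₀ % 2 = 0 := by
    have h2 := hmemJ n₀ le_rfl
    rw [hfn] at h2
    have hyJ : y ∉ J := fun h => hy (M.subset_closure J hJM.subset_ground h)
    rcases Nat.mod_two_eq_zero_or_one n₀ with h3 | h3
    · exact h3
    · exact absurd (h2.mpr h3) hyJ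
  have hgr : ∀ k, k ≤ n₀ → f k ∈ M.E := by
    intro k hk
    cases k with
    | zero => rw [hf0]; exact hxE
    | succ k =>
      rcases arc_cases (harc k (by omega)) with ⟨-, hv⟩ | ⟨-, hv⟩
      · exact hJM.subset_ground hv
      · exact hv.1
  obtain ⟨n, rfl⟩ : ∃ n, n₀ = 2 * n := ⟨n₀ / 2, by omega⟩
  refine ⟨f '' Set.Iic (2 * n), n, f, rfl, ?_, hinj, hf0, hfn, hx, hy, harc, hnojump⟩
  rintro w ⟨k, hk, rfl⟩
  exact hgr k hk

end Aux5
section Aux6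

variable {M N : Matroid α} {I J K P Q : Set α} {x y : α}

lemma transfer (hE : M.E = N.E) (hIM : M.Indep I) (hIN : N.Indep I) (hIfin : I.Finite)
    (hJM : M.Indep J) (hJN : N.Indep J) (hJfin : J.Finite)
    (hclM : M.closure I = M.closure J) (hclN : N.closure I = N.closure J)
    (hP : IsAugPath M N I P x y) : ∃ Q, IsAugPath M N J Q x y := by
  by_cases hxy : x = y
  · subst hxy
    obtain ⟨n, f, hPeq, hPE, hinj, hf0, hf2n, hxcl, hycl, -, -⟩ := hP
    have hxE : x ∈ M.E := hPE (hPeq ▸ ⟨0, Set.mem_Iic.mpr (by omega), hf0⟩)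
    refine ⟨{x}, 0, fun _ => x, ?_, by simpa using hxE, ?_, rfl, rfl,
      by rwa [← hclN], by rwa [← hclM], by omega, by omega⟩
    · ext w
      constructor
      · rintro rfl
        exact ⟨0, Set.mem_Iic.mpr (by omega), rfl⟩
      · rintro ⟨k, -, rfl⟩
        rfl
    · intro i _ j _ _
      have hi2 : i ≤ 2 * 0 := ‹i ∈ Set.Iic (2 * 0)›
      have hj2 : j ≤ 2 * 0 := ‹j ∈ Set.Iic (2 * 0)›
      omega
  · obtain ⟨hKM, hKN, hKclM, hKclN, hxK, hyK, hsubM, hsubN⟩ := aug_exchange hE hIM hIN hP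
    obtain ⟨n, f, hPeq, hPE, -, hf0, hf2n, hxcl, hycl, -, -⟩ := hP
    have hPfin : P.Finite := hPeq ▸ (Set.Finite.image f (Set.finite_Iic _))
    have hKfin : (I ∆ P).Finite := (hIfin.union hPfin).subset Set.symmDiff_subset_union
    have hxcl' : x ∉ N.closure J := by rwa [← hclN]
    have hycl' : y ∉ M.closure J := by rwa [← hclM]
    refine augpath_of_rtg hE hJM hJN (hKM.subset_ground hxK) hxcl' hycl' ?_
    refine reach_of_witness hE hJM hJN hJfin hKM hKN hKfin hxK hyK hxy hxcl' hycl'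
      ?_ ?_ ?_ ?_
    · rw [← hclM]; exact hsubM
    · rw [← hclN]; exact hsubN
    · calc J ⊆ M.closure J := M.subset_closure J hJM.subset_ground
        _ = M.closure I := hclM.symm
        _ ⊆ M.closure (insert y I) := M.closure_subset_closure (Set.subset_insert _ _)
        _ = M.closure (I ∆ P) := hKclM.symm
    · calc J ⊆ N.closure J := N.subset_closure J hJN.subset_ground
        _ = N.closure I := hclN.symm
        _ ⊆ N.closure (insert x I) := N.closure_subset_closure (Set.subset_insert _ _)
        _ = N.closure (I ∆ P) := hKclN.symm

end Aux6
/-- If `I ∼ J`, then for all `x, y` there is an `xy`-augmenting path for `I` iff there is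
one for `J`; moreover if `P` is an `xy`-augmenting path for `I` and `Q` is one for `J`,
then `I △ P ∼ J △ Q`. -/
theorem statement13 (M N : Matroid α) [M.Finitary] [N.Finitary] (hE : M.E = N.E)
    (I J : Set α) (hIfin : I.Finite) (hIM : M.Indep I) (hIN : N.Indep I)
    (hJfin : J.Finite) (hJM : M.Indep J) (hJN : N.Indep J) (hsim : Sim M N I J) :
    (∀ x y, (∃ P, IsAugPath M N I P x y) ↔ ∃ Q, IsAugPath M N J Q x y) ∧
      ∀ x y P Q, IsAugPath M N I P x y → IsAugPath M N J Q x y →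
        Sim M N (I ∆ P) (J ∆ Q) := by
  have hclM : M.closure I = M.closure J := by
    apply subset_antisymm
    · exact M.closure_subset_closure_of_subset_closure (fun a ha => (hsim.1 ha).1)
    · exact M.closure_subset_closure_of_subset_closure (fun a ha => (hsim.2 ha).1)
  have hclN : N.closure I = N.closure J := by
    apply subset_antisymm
    · exact N.closure_subset_closure_of_subset_closure (fun a ha => (hsim.1 ha).2)
    · exact N.closure_subset_closure_of_subset_closure (fun a ha => (hsim.2 ha).2)
  constructor
  · intro x y
    constructor
    · rintro ⟨P, hP⟩
      exact transfer hE hIM hIN hIfin hJM hJN hJfin hclM hclN hP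
    · rintro ⟨Q, hQ⟩
      exact transfer hE hJM hJN hJfin hIM hIN hIfin hclM.symm hclN.symm hQ
  · intro x y P Q hP hQ
    obtain ⟨hPM, hPN, hPclM, hPclN, -, -, -, -⟩ := aug_exchange hE hIM hIN hP
    obtain ⟨hQM, hQN, hQclM, hQclN, -, -, -, -⟩ := aug_exchange hE hJM hJN hQ
    have e1 : M.closure (I ∆ P) = M.closure (J ∆ Q) := by
      rw [hPclM, hQclM]
      exact closure_insert_congr hclM y
    have e2 : N.closure (I ∆ P) = N.closure (J ∆ Q) := by
      rw [hPclN, hQclN]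
      exact closure_insert_congr hclN x
    constructor
    · intro w hw
      refine ⟨?_, ?_⟩
      · rw [← e1]; exact M.subset_closure _ hPM.subset_ground hw
      · rw [← e2]; exact N.subset_closure _ hPN.subset_ground hw
    · intro w hw
      refine ⟨?_, ?_⟩
      · rw [e1]; exact M.subset_closure _ hQM.subset_ground hw
      · rw [e2]; exact N.subset_closure _ hQN.subset_ground hw

end AZ
end

section
/- For finite common independent sets I and J of M and N: I ⊴ J if and only if there exists a finite common independent set J' with J' ∼ J and J' ∈ A(I). -/
open Set Matroid
open scoped symmDiff

namespace AZ

variable {α : Type*}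

variable {M N : Matroid α} {I J K C C₁ C₂ X Y S P : Set α} {e x y z : α}

lemma Circuit.diff_indep (hC : Circuit M C) (he : e ∈ C) : M.Indep (C \ {e}) :=
  hC.2.2 _ (sdiff_singleton_ssubset.2 he)

lemma Circuit.mem_closure_diff (hC : Circuit M C) (he : e ∈ C) :
    e ∈ M.closure (C \ {e}) := by
  have hI := hC.diff_indep he
  by_contra h
  have : M.Indep (insert e (C \ {e})) := by
    rw [hI.insert_indep_iff]
    exact Or.inl ⟨hC.1 he, h⟩
  rw [insert_diff_singleton, insert_eq_of_mem he] at this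
  exact hC.2.1 this

lemma exists_circuit_of_dep (hfin : X.Finite) (hX : X ⊆ M.E) (hdep : ¬ M.Indep X) :
    ∃ C ⊆ X, Circuit M C := by
  obtain ⟨n, hn⟩ : ∃ n, X.ncard ≤ n := ⟨X.ncard, le_rfl⟩
  induction n generalizing X with
  | zero =>
    rw [Nat.le_zero, Set.ncard_eq_zero hfin] at hn
    exact absurd (hn ▸ M.empty_indep) hdep
  | succ n ih =>
    by_cases h : ∀ D ⊂ X, M.Indep D
    · exact ⟨X, Subset.rfl, hX, hdep, h⟩
    · push_neg at h
      obtain ⟨D, hDX, hDdep⟩ := h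
      obtain ⟨C, hCD, hC⟩ := ih (hfin.subset hDX.subset) (hDX.subset.trans hX) hDdep
        (by have := Set.ncard_lt_ncard hDX hfin; omega)
      exact ⟨C, hCD.trans hDX.subset, hC⟩

lemma exists_fundCircuit (hK : M.Indep K) (hfin : K.Finite) (hz : z ∈ M.closure K)
    (hzK : z ∉ K) : ∃ C, Circuit M C ∧ C ⊆ insert z K ∧ z ∈ C := by
  have hdep : ¬ M.Indep (insert z K) := by
    intro h
    have := h.notMem_closure_diff_of_mem (mem_insert _ _)
    rw [insert_diff_of_mem _ (mem_singleton z), diff_singleton_eq_self hzK] at this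
    exact this hz
  obtain ⟨C, hCX, hC⟩ := exists_circuit_of_dep (hfin.insert z)
    (insert_subset (M.closure_subset_ground K hz) hK.subset_ground) hdep
  refine ⟨C, hC, hCX, ?_⟩
  by_contra hzC
  exact hC.2.1 (hK.subset fun a haC => ((hCX haC).resolve_left (by rintro rfl; exact hzC haC)))

lemma closure_insert_of_mem_closure (hz : z ∈ M.closure Y) (hY : Y ⊆ M.E) :
    M.closure (insert z Y) = M.closure Y := by
  refine subset_antisymm (M.closure_subset_closure_of_subset_closure
    (insert_subset hz (M.subset_closure Y hY))) (M.closure_subset_closure (subset_insert _ _))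

lemma fundCircuit_unique (hK : M.Indep K) (hC1 : Circuit M C₁) (h1 : C₁ ⊆ insert z K)
    (hz1 : z ∈ C₁) (hC2 : Circuit M C₂) (h2 : C₂ ⊆ insert z K) (hz2 : z ∈ C₂) : C₁ = C₂ := by
  have hzK : z ∉ K := by
    intro hzK
    rw [insert_eq_of_mem hzK] at h1
    exact hC1.2.1 (hK.subset h1)
  have key : ∀ C₁' C₂', Circuit M C₁' → C₁' ⊆ insert z K → z ∈ C₁' →
      Circuit M C₂' → C₂' ⊆ insert z K → z ∈ C₂' → C₁' ⊆ C₂' := by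
    intro C₁' C₂' hC1 h1 hz1 hC2 h2 hz2
    by_contra hsub
    obtain ⟨e, heC1, heC2⟩ := not_subset.1 hsub
    have hez : e ≠ z := fun h => heC2 (h ▸ hz2)
    have heK : e ∈ K := ((h1 heC1).resolve_left hez)
    have he1 : e ∈ M.closure (C₁' \ {e}) := hC1.mem_closure_diff heC1
    have hzcl : z ∈ M.closure (K \ {e}) := by
      refine M.closure_subset_closure ?_ (hC2.mem_closure_diff hz2)
      intro a ⟨haC, haz⟩
      exact ⟨(h2 haC).resolve_left haz, fun h => heC2 ((h : a = e) ▸ haC)⟩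
    have hKe : K \ {e} ⊆ M.E := diff_subset.trans hK.subset_ground
    have hsub2 : C₁' \ {e} ⊆ insert z (K \ {e}) := by
      intro a ⟨haC, hae⟩
      rcases h1 haC with h | h
      · exact Or.inl h
      · exact Or.inr ⟨h, hae⟩
    have : e ∈ M.closure (K \ {e}) := by
      have

 := (M.closure_subset_closure hsub2).trans
        (closure_insert_of_mem_closure hzcl hKe).subset he1
      exact this
    exact hK.notMem_closure_diff_of_mem heK this
  exact subset_antisymm (key _ _ hC1 h1 hz1 hC2 h2 hz2) (key _ _ hC2 h2 hz2 hC1 h1 hz1)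

lemma encard_le_of_indep_subset_closure (hX : M.Indep X) (hXY : X ⊆ M.closure Y)
    (hYE : Y ⊆ M.E) : X.encard ≤ Y.encard := by
  obtain ⟨B, hB⟩ := M.exists_isBasis Y hYE
  have hXB : X ⊆ M.closure B := hB.closure_eq_closure ▸ hXY
  have hXBE : X ∪ B ⊆ M.E := union_subset hX.subset_ground hB.indep.subset_ground
  have hBbasis : M.IsBasis B (X ∪ B) :=
    hB.indep.isBasis_of_subset_of_subset_closure subset_union_right
      (union_subset hXB (M.subset_closure B hB.indep.subset_ground))
  obtain ⟨X', hX', hXX'⟩ := hX.subset_isBasis_of_subset subset_union_left hXBE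
  calc X.encard ≤ X'.encard := encard_mono hXX'
    _ = B.encard := hX'.encard_eq_encard hBbasis
    _ ≤ Y.encard := encard_mono hB.subset


lemma exchange_lemma (M : Matroid α) (k : ℕ) :
    ∀ (K : Set α) (x y : ℕ → α), M.Indep K → K.Finite →
    (∀ i < k, x i ∈ M.closure K) → (∀ i < k, x i ∉ K) → (∀ i < k, y i ∈ K) →
    (∀ i < k, ∃ C, Circuit M C ∧ C ⊆ insert (x i) K ∧ x i ∈ C ∧ y i ∈ C) →
    (∀ i j, i < j → j < k → ∀ C, Circuit M C → C ⊆ insert (x i) K → x i ∈ C → y j ∉ C) →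
    (InjOn x (Iio k)) → (InjOn y (Iio k)) →
    M.Indep ((K \ y '' Iio k) ∪ x '' Iio k) ∧
      M.closure ((K \ y '' Iio k) ∪ x '' Iio k) = M.closure K := by
  induction k with
  | zero =>
    intro K x y hK _ _ _ _ _ _ _ _
    have h0 : Iio 0 = (∅ : Set ℕ) := by ext i; simp
    rw [h0, image_empty, image_empty, diff_empty, union_empty]
    exact ⟨hK, rfl⟩
  | succ k ih =>
    intro K x y hK hfin hxcl hxK hyK hcirc htri hxinj hyinj
    set a := x k with ha
    set b := y k with hb
    obtain ⟨C, hC, hCsub, haC, hbC⟩ := hcirc k (lt_add_one k)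
    set K1 : Set α := insert a (K \ {b}) with hK1def
    have haK : a ∉ K := hxK k (lt_add_one k)
    have hbK : b ∈ K := hyK k (lt_add_one k)
    have haE : a ∈ M.E := M.closure_subset_ground K (hxcl k (lt_add_one k))
    have hK1E : K1 ⊆ M.E := insert_subset haE (diff_subset.trans hK.subset_ground)
    have hK1fin : K1.Finite := ((hfin.subset diff_subset).insert a)
    -- K1 is independent
    have hK1 : M.Indep K1 := by
      by_contra hdep
      obtain ⟨C', hC'sub, hC'⟩ := exists_circuit_of_dep hK1fin hK1E hdep
      have haC' : a ∈ C' := by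
        by_contra haC'
        refine hC'.2.1 (hK.subset fun e he => ?_)
        rcases hC'sub he with rfl | h
        · exact absurd he haC'
        · exact h.1
      have hC'K : C' ⊆ insert a K := hC'sub.trans (insert_subset_insert diff_subset)
      have heqC : C' = C := fundCircuit_unique hK hC' hC'K haC' hC hCsub haC
      rcases hC'sub (heqC ▸ hbC) with h | h
      · exact haK (h ▸ hbK)
      · exact h.2 rfl
    -- closures agree
    have hclK1 : M.closure K1 = M.closure K := by
      apply subset_antisymm
      · have : K1 ⊆ insert a K := insert_subset_insert diff_subset
        exact (M.closure_subset_closure this).trans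
          (closure_insert_of_mem_closure (hxcl k (lt_add_one k)) hK.subset_ground).subset
      · have hbcl : b ∈ M.closure K1 := by
          refine M.closure_subset_closure ?_ (hC.mem_closure_diff hbC)
          intro e ⟨heC, heb⟩
          rcases hCsub heC with rfl | h
          · exact mem_insert _ _
          · exact Or.inr ⟨h, heb⟩
        have : K ⊆ M.closure K1 := by
          intro e he
          by_cases heb : e = b
          · exact heb ▸ hbcl
          · exact M.subset_closure K1 hK1E (Or.inr ⟨he, heb⟩)
        exact M.closure_subset_closure_of_subset_closure this
    -- apply IH to K1
    have hne : ∀ i, i < k → x i ≠ a := by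
      intro i hi h
      have := hxinj (show i ∈ Iio (k+1) by simp; omega) (show k ∈ Iio (k+1) by simp) h
      omega
    have hyne : ∀ i, i < k → y i ≠ b := by
      intro i hi h
      have := hyinj (show i ∈ Iio (k+1) by simp; omega) (show k ∈ Iio (k+1) by simp) h
      omega
    have hxK1 : ∀ i < k, x i ∉ K1 := by
      rintro i hi (h | h)
      · exact hne i hi h
      · exact hxK i (by omega) h.1
    have hyK1 : ∀ i < k, y i ∈ K1 := fun i hi => Or.inr ⟨hyK i (by omega), hyne i hi⟩
    have hxcl1 : ∀ i < k, x i ∈ M.closure K1 := fun i hi => hclK1 ▸ hxcl i (by omega)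
    have hcirc1 : ∀ i < k, ∃ C', Circuit M C' ∧ C' ⊆ insert (x i) K1 ∧ x i ∈ C' ∧ y i ∈ C' := by
      intro i hi
      obtain ⟨Ci, hCi, hCisub, hxCi, hyCi⟩ := hcirc i (by omega)
      refine ⟨Ci, hCi, ?_, hxCi, hyCi⟩
      intro e he
      rcases hCisub he with rfl | heK
      · exact mem_insert _ _
      · refine Or.inr (Or.inr ⟨heK, ?_⟩)
        rintro rfl
        exact htri i k hi (lt_add_one k) Ci hCi hCisub hxCi he
    have htri1 : ∀ i j, i < j → j < k → ∀ C', Circuit M C' → C' ⊆ insert (x i) K1 →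
        x i ∈ C' → y j ∉ C' := by
      intro i j hij hj C' hC' hC'sub hxC' hyC'
      obtain ⟨Ci, hCi, hCisub, hxCi, hyCi⟩ := hcirc1 i (by omega)
      have := fundCircuit_unique hK1 hC' hC'sub hxC' hCi hCisub hxCi
      subst this
      obtain ⟨Ci', hCi', hCisub', hxCi', hyCi'⟩ := hcirc i (by omega)
      have heq := fundCircuit_unique hK1 hC' hC'sub hxC'
        (hcirc1 i (by omega)).choose_spec.1 (hcirc1 i (by omega)).choose_spec.2.1
        (hcirc1 i (by omega)).choose_spec.2.2.1
      -- C' equals the original circuit Ci from hcirc, which avoids y j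
      obtain ⟨Ci2, hCi2, hCi2sub, hxCi2, hyCi2⟩ := hcirc i (by omega)
      have hCi2sub' : Ci2 ⊆ insert (x i) K1 := by
        intro e he
        rcases hCi2sub he with rfl | heK
        · exact mem_insert _ _
        · refine Or.inr (Or.inr ⟨heK, ?_⟩)
          rintro rfl
          exact htri i k (by omega) (lt_add_one k) Ci2 hCi2 hCi2sub hxCi2 he
      have := fundCircuit_unique hK1 hC' hC'sub hxC' hCi2 hCi2sub' hxCi2
      subst this
      exact htri i j hij (by omega) C' hCi2 hCi2sub hxCi2 hyC'
    have hxinj1 : InjOn x (Iio k) := hxinj.mono (fun i hi => by simp at hi ⊢; omega)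
    have hyinj1 : InjOn y (Iio k) := hyinj.mono (fun i hi => by simp at hi ⊢; omega)
    obtain ⟨hind, hcl⟩ := ih K1 x y hK1 hK1fin hxcl1 hxK1 hyK1 hcirc1 htri1 hxinj1 hyinj1
    have hIio : Iio (k+1) = insert k (Iio k) := by ext i; simp
    have haY : a ∉ y '' Iio k := by
      rintro ⟨i, hi, hEq⟩
      exact haK (hEq ▸ hyK i (by simp at hi; omega))
    have hset : (K1 \ y '' Iio k) ∪ x '' Iio k = (K \ y '' Iio (k+1)) ∪ x '' Iio (k+1) := by
      rw [hIio, image_insert_eq, image_insert_eq, hK1def,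
        insert_diff_of_notMem _ haY, diff_diff, singleton_union, insert_union, union_insert]
    rw [hset] at hind hcl
    exact ⟨hind, hcl.trans hclK1⟩

lemma encard_Iio (n : ℕ) : (Iio n : Set ℕ).encard = n := by
  have : (Iio n : Set ℕ) = ↑(Finset.range n) := by ext i; simp
  rw [this, encard_coe_eq_coe_finsetCard, Finset.card_range]

lemma augStep_spec (hE : M.E = N.E) (hKfin : K.Finite) (hKM : M.Indep K) (hKN : N.Indep K)
    (hP : IsAugPath M N K P x y) :
    (K ∆ P).Finite ∧ M.Indep (K ∆ P) ∧ N.Indep (K ∆ P) ∧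
      K ⊆ M.closure (K ∆ P) ∧ K ⊆ N.closure (K ∆ P) ∧ (K ∆ P).encard = K.encard + 1 := by
  obtain ⟨n, f, hPdef, hPE, hinj, hf0, hf2n, hx0, hy0, harc, hnj⟩ := hP
  -- parity
  have hparity : ∀ i ≤ 2 * n, (f i ∈ K ↔ i % 2 = 1) := by
    intro i
    induction i with
    | zero =>
      intro _
      simp only [Nat.zero_mod]
      rw [hf0]
      exact ⟨fun h => absurd (N.subset_closure K hKN.subset_ground h) hx0, by omega⟩
    | succ i ih =>
      intro hi
      have ihi := ih (by omega)
      rcases harc i (by omega) with ⟨⟨_, hfi⟩, hfi1, _⟩ | ⟨hfi, ⟨_, hfi1⟩, _⟩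
      · have : ¬ (i % 2 = 1) := fun h => hfi (ihi.2 h)
        constructor
        · intro _; omega
        · intro _; exact hfi1
      · have : i % 2 = 1 := ihi.1 hfi
        exact ⟨fun h => absurd h hfi1, by omega⟩
  have hmemP : ∀ i ≤ 2 * n, f i ∈ P := fun i hi => hPdef ▸ mem_image_of_mem f hi
  -- index sets
  set Odds : Set α := f '' {i | i ≤ 2 * n ∧ i % 2 = 1} with hOdds
  set Evens : Set α := f '' {i | i ≤ 2 * n ∧ i % 2 = 0} with hEvens
  have hOddsK : Odds ⊆ K := by rintro e ⟨i, ⟨hi, hodd⟩, rfl⟩; exact (hparity i hi).2 hodd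
  have hEvensK : ∀ e ∈ Evens, e ∉ K := by
    rintro e ⟨i, ⟨hi, heven⟩, rfl⟩ h
    have := (hparity i hi).1 h; omega
  have hsymm : K ∆ P = (K \ Odds) ∪ Evens := by
    rw [Set.symmDiff_def]
    congr 1
    · ext e
      simp only [mem_diff, and_congr_right_iff]
      intro heK
      constructor
      · intro heP h
        refine heP ?_
        rw [hPdef]
        obtain ⟨i, hi, rfl⟩ := h
        exact mem_image_of_mem f hi.1
      · intro hO heP
        rw [hPdef] at heP
        obtain ⟨i, hi, rfl⟩ := heP
        exact hO ⟨i, ⟨hi, (hparity i hi).1 heK⟩, rfl⟩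
    · ext e
      constructor
      · rintro ⟨heP, heK⟩
        rw [hPdef] at heP
        obtain ⟨i, hi, rfl⟩ := heP
        refine ⟨i, ⟨hi, ?_⟩, rfl⟩
        have h2 := (hparity i hi)
        have : ¬ (i % 2 = 1) := fun h => heK (h2.2 h)
        omega
      · rintro ⟨i, ⟨hi, heven⟩, rfl⟩
        exact ⟨hmemP i hi, fun h => by have := (hparity i hi).1 h; omega⟩
  have hKE : K ⊆ M.E := hKM.subset_ground
  -- M-side data
  have harcM : ∀ i < n, f (2*i) ∈ M.closure K ∧ f (2*i+1) ∈ K ∧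
      ∃ C, Circuit M C ∧ C ⊆ insert (f (2*i)) K ∧ f (2*i) ∈ C ∧ f (2*i+1) ∈ C := by
    intro i hi
    rcases harc (2*i) (by omega) with ⟨_, h1, h2, h3⟩ | ⟨hmem, _⟩
    · exact ⟨h2, h1, h3⟩
    · exact absurd ((hparity (2*i) (by omega)).1 hmem) (by omega)
  have hMind : M.Indep ((K \ (fun i => f (2*i+1)) '' Iio n) ∪ (fun i => f (2*i)) '' Iio n) ∧
      M.closure ((K \ (fun i => f (2*i+1)) '' Iio n) ∪ (fun i => f (2*i)) '' Iio n)
        = M.closure K := by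
    apply exchange_lemma M n K _ _ hKM hKfin
    · exact fun i hi => (harcM i hi).1
    · exact fun i hi h => by have := (hparity (2*i) (by omega)).1 h; omega
    · exact fun i hi => (harcM i hi).2.1
    · exact fun i hi => (harcM i hi).2.2
    · intro i j hij hj C hC hCsub hxC hyC
      refine hnj (2*i) (2*j+1) (by omega) (by omega) (Or.inl ?_)
      refine ⟨⟨hPE (hmemP (2*i) (by omega)), fun h => by
        have := (hparity (2*i) (by omega)).1 h; omega⟩,
        (harcM j hj).2.1, (harcM i (by omega)).1, C, hC, hCsub, hxC, hyC⟩
    · intro i hi j hj h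
      have := hinj (show 2*i ∈ Iic (2*n) by simp at hi ⊢; omega)
        (show 2*j ∈ Iic (2*n) by simp at hj ⊢; omega) h
      omega
    · intro i hi j hj h
      have := hinj (show 2*i+1 ∈ Iic (2*n) by simp at hi ⊢; omega)
        (show 2*j+1 ∈ Iic (2*n) by simp at hj ⊢; omega) h
      omega
  -- N-side data
  have harcN : ∀ i < n, f (2*n-2*i) ∈ N.closure K ∧ f (2*n-2*i-1) ∈ K ∧
      ∃ C, Circuit N C ∧ C ⊆ insert (f (2*n-2*i)) K ∧ f (2*n-2*i) ∈ C ∧ f (2*n-2*i-1) ∈ C := by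
    intro i hi
    have harc' := harc (2*n-2*i-1) (by omega)
    have heq : 2*n-2*i-1+1 = 2*n-2*i := by omega
    rw [heq] at harc'
    rcases harc' with ⟨⟨_, hmem⟩, _⟩ | ⟨h1, _, h2, h3⟩
    · exact absurd ((hparity (2*n-2*i-1) (by omega)).2 (by omega)) hmem
    · exact ⟨h2, h1, h3⟩
  have hNind : N.Indep ((K \ (fun i => f (2*n-2*i-1)) '' Iio n) ∪ (fun i => f (2*n-2*i)) '' Iio n) ∧
      N.closure ((K \ (fun i => f (2*n-2*i-1)) '' Iio n) ∪ (fun i => f (2*n-2*i)) '' Iio n)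
        = N.closure K := by
    apply exchange_lemma N n K _ _ hKN hKfin
    · exact fun i hi => (harcN i hi).1
    · exact fun i hi h => by have := (hparity (2*n-2*i) (by omega)).1 h; omega
    · exact fun i hi => (harcN i hi).2.1
    · exact fun i hi => (harcN i hi).2.2
    · intro i j hij hj C hC hCsub hxC hyC
      refine hnj (2*n-2*j-1) (2*n-2*i) (by omega) (by omega) (Or.inr ?_)
      refine ⟨(harcN j hj).2.1, ⟨hPE (hmemP (2*n-2*i) (by omega)), fun h => by
        have := (hparity (2*n-2*i) (by omega)).1 h; omega⟩,
        (harcN i (by omega)).1, C, hC, hCsub, hxC, hyC⟩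
    · intro i hi j hj h
      have := hinj (show 2*n-2*i ∈ Iic (2*n) by simp only [mem_Iic]; omega)
        (show 2*n-2*j ∈ Iic (2*n) by simp only [mem_Iic]; omega) h
      simp at hi hj
      omega
    · intro i hi j hj h
      have := hinj (show 2*n-2*i-1 ∈ Iic (2*n) by simp only [mem_Iic]; omega)
        (show 2*n-2*j-1 ∈ Iic (2*n) by simp only [mem_Iic]; omega) h
      simp at hi hj
      omega
  -- identify the image sets
  have hidxO : ((fun i => 2*i+1) '' Iio n : Set ℕ) = {i | i ≤ 2*n ∧ i % 2 = 1} := by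
    ext i
    simp only [mem_image, mem_Iio, mem_setOf_eq]
    constructor
    · rintro ⟨j, hj, rfl⟩; omega
    · rintro ⟨h1, h2⟩; exact ⟨i / 2, by omega, by omega⟩
  have hidxO' : ((fun i => 2*n-2*i-1) '' Iio n : Set ℕ) = {i | i ≤ 2*n ∧ i % 2 = 1} := by
    ext i
    simp only [mem_image, mem_Iio, mem_setOf_eq]
    constructor
    · rintro ⟨j, hj, rfl⟩; omega
    · rintro ⟨h1, h2⟩; exact ⟨(2*n-i) / 2, by omega, by omega⟩
  have hidxE : (insert (2*n) ((fun i => 2*i) '' Iio n) : Set ℕ) = {i | i ≤ 2*n ∧ i % 2 = 0} := by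
    ext i
    simp only [mem_insert_iff, mem_image, mem_Iio, mem_setOf_eq]
    constructor
    · rintro (rfl | ⟨j, hj, rfl⟩) <;> omega
    · rintro ⟨h1, h2⟩
      rcases Nat.lt_or_ge i (2*n) with h | h
      · exact Or.inr ⟨i / 2, by omega, by omega⟩
      · left; omega
  have hidxE' : (insert 0 ((fun i => 2*n-2*i) '' Iio n) : Set ℕ) = {i | i ≤ 2*n ∧ i % 2 = 0} := by
    ext i
    simp only [mem_insert_iff, mem_image, mem_Iio, mem_setOf_eq]
    constructor
    · rintro (rfl | ⟨j, hj, rfl⟩) <;> omega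
    · rintro ⟨h1, h2⟩
      rcases Nat.eq_zero_or_pos i with h | h
      · left; omega
      · exact Or.inr ⟨(2*n-i) / 2, by omega, by omega⟩
  have himgO : (fun i => f (2*i+1)) '' Iio n = Odds := by
    rw [hOdds, ← hidxO, image_image]
  have himgO' : (fun i => f (2*n-2*i-1)) '' Iio n = Odds := by
    rw [hOdds, ← hidxO', image_image]
  have himgE : insert (f (2*n)) ((fun i => f (2*i)) '' Iio n) = Evens := by
    rw [hEvens, ← hidxE, image_insert_eq, image_image]
  have himgE' : insert (f 0) ((fun i => f (2*n-2*i)) '' Iio n) = Evens := by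
    rw [hEvens, ← hidxE', image_insert_eq, image_image]
  have hKPM : K ∆ P = insert (f (2*n)) ((K \ (fun i => f (2*i+1)) '' Iio n)
      ∪ (fun i => f (2*i)) '' Iio n) := by
    rw [hsymm, ← himgO, ← himgE, union_insert]
  have hKPN : K ∆ P = insert (f 0) ((K \ (fun i => f (2*n-2*i-1)) '' Iio n)
      ∪ (fun i => f (2*n-2*i)) '' Iio n) := by
    rw [hsymm, ← himgO', ← himgE', union_insert]
  -- independence in M
  have hMcl : y ∉ M.closure ((K \ (fun i => f (2*i+1)) '' Iio n) ∪ (fun i => f (2*i)) '' Iio n) :=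
    hMind.2 ▸ hy0
  have hindM : M.Indep (K ∆ P) := by
    rw [hKPM, hf2n]
    exact (hMind.1.insert_indep_iff).2 (Or.inl ⟨hPE (hf2n ▸ hmemP (2*n) le_rfl), hMcl⟩)
  have hNcl : x ∉ N.closure ((K \ (fun i => f (2*n-2*i-1)) '' Iio n)
      ∪ (fun i => f (2*n-2*i)) '' Iio n) := hNind.2 ▸ hx0
  have hindN : N.Indep (K ∆ P) := by
    rw [hKPN, hf0]
    refine (hNind.1.insert_indep_iff).2 (Or.inl ⟨?_, hNcl⟩)
    rw [← hE]
    exact hPE (hf0 ▸ hmemP 0 (by omega))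
  -- K in closures
  have hclM : K ⊆ M.closure (K ∆ P) := by
    rw [hKPM]
    exact (M.subset_closure K hKE).trans (hMind.2 ▸ M.closure_subset_closure (subset_insert _ _))
  have hclN : K ⊆ N.closure (K ∆ P) := by
    rw [hKPN]
    refine (N.subset_closure K (hE ▸ hKE)).trans
      (hNind.2 ▸ N.closure_subset_closure (subset_insert _ _))
  -- finiteness and cardinality
  have hPfin : P.Finite := hPdef ▸ ((finite_Iic (2*n)).image f)
  have hfin : (K ∆ P).Finite := by
    rw [hsymm]
    exact ((hKfin.subset diff_subset).union ((hPfin.subset (by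
      rw [hPdef, hEvens]
      intro e ⟨i, hi, hEq⟩
      exact ⟨i, hi.1, hEq⟩))))
  have hcard : (K ∆ P).encard = K.encard + 1 := by
    have hdisj : Disjoint (K \ Odds) Evens :=
      disjoint_left.2 fun e he h2 => hEvensK e h2 he.1
    have hOcard : Odds.encard = n := by
      rw [← himgO, InjOn.encard_image, encard_Iio]
      intro i hi j hj h
      simp only [mem_Iio] at hi hj
      have := hinj (show 2*i+1 ∈ Iic (2*n) by simp; omega)
        (show 2*j+1 ∈ Iic (2*n) by simp; omega) h
      omega
    have hEcard : Evens.encard = n + 1 := by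
      have hidxE2 : ((fun i => 2*i) '' Iio (n+1) : Set ℕ) = {i | i ≤ 2*n ∧ i % 2 = 0} := by
        ext i; simp only [mem_image, mem_Iio, mem_setOf_eq]
        constructor
        · rintro ⟨j, hj, rfl⟩; omega
        · rintro ⟨h1, h2⟩; exact ⟨i/2, by omega, by omega⟩
      rw [hEvens, ← hidxE2, image_image, InjOn.encard_image, encard_Iio]
      · push_cast; ring
      · intro i hi j hj h
        simp only [mem_Iio] at hi hj
        have := hinj (show 2*i ∈ Iic (2*n) by simp; omega)
          (show 2*j ∈ Iic (2*n) by simp; omega) h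
        omega
    have h1 : (K \ Odds).encard + Odds.encard = K.encard :=
      encard_diff_add_encard_of_subset hOddsK
    rw [hOcard] at h1
    rw [hsymm, encard_union_eq hdisj, hEcard, ← h1]
    ring
  exact ⟨hfin, hindM, hindN, hclM, hclN, hcard⟩

def HasWalk (M N : Matroid α) (K S : Set α) : Prop :=
  ∃ (k : ℕ) (f : ℕ → α), (∀ i ≤ k, f i ∈ S) ∧ f 0 ∉ N.closure K ∧ f k ∉ M.closure K ∧
    ∀ i < k, Arc M N K (f i) (f (i + 1))

lemma exists_augPath_of_walk (hKM : M.Indep K) (hKN : N.Indep K) (hE : M.E = N.E)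
    (hS : S ⊆ M.E) (h : HasWalk M N K S) :
    ∃ P x y, IsAugPath M N K P x y ∧ P ⊆ S := by
  classical
  have hQ : ∃ k, ∃ f : ℕ → α, (∀ i ≤ k, f i ∈ S) ∧ f 0 ∉ N.closure K ∧ f k ∉ M.closure K ∧
      ∀ i < k, Arc M N K (f i) (f (i + 1)) := h
  have hspec := Nat.find_spec hQ
  have hmin : ∀ m, m < Nat.find hQ → ¬ (∃ f : ℕ → α, (∀ i ≤ m, f i ∈ S) ∧ f 0 ∉ N.closure K ∧
      f m ∉ M.closure K ∧ ∀ i < m, Arc M N K (f i) (f (i + 1))) :=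
    fun m hm => Nat.find_min hQ hm
  generalize hgen : Nat.find hQ = k at hspec hmin
  obtain ⟨f, hfS, hf0, hfk, harc⟩ := hspec
  -- no jumping arcs
  have hnj : ∀ i j, i + 1 < j → j ≤ k → ¬ Arc M N K (f i) (f j) := by
    intro i j hij hjk harcij
    set d := j - i - 1 with hd
    refine hmin (k - d) (by omega) ⟨fun m => if m ≤ i then f m else f (m + d), ?_, ?_, ?_, ?_⟩
    · intro m hm
      by_cases hmi : m ≤ i
      · simp only [hmi, if_pos]; exact hfS m (by omega)
      · simp only [hmi, if_neg, if_false]; exact hfS (m + d) (by omega)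
    · simp only [Nat.zero_le, if_pos, le_refl]
      simpa using hf0
    · have h1 : ¬ (k - d ≤ i) := by omega
      simp only [h1, if_neg, if_false]
      have : k - d + d = k := by omega
      rw [this]
      exact hfk
    · intro m hm
      by_cases h1 : m + 1 ≤ i
      · simp only [show m ≤ i by omega, if_pos, h1]
        exact harc m (by omega)
      · by_cases h2 : m ≤ i
        · have hmi : m = i := by omega
          simp only [h2, if_pos, h1, if_neg, if_false]
          have : m + 1 + d = j := by omega
          rw [this, hmi]
          exact harcij
        · simp only [h2, h1, if_neg, if_false]
          have : m + 1 + d = m + d + 1 := by omega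
          rw [this]
          exact harc (m + d) (by omega)
  -- injectivity
  have hinjaux : ∀ a b, a ≤ k → b ≤ k → f a = f b → a < b → False := by
    intro a b ha hb hab hlt
    set d := b - a with hd
    refine hmin (k - d) (by omega) ⟨fun m => if m ≤ a then f m else f (m + d), ?_, ?_, ?_, ?_⟩
    · intro m hm
      by_cases hmi : m ≤ a
      · simp only [hmi, if_pos]; exact hfS m (by omega)
      · simp only [hmi, if_neg, if_false]; exact hfS (m + d) (by omega)
    · simp only [Nat.zero_le, if_pos]
      simpa using hf0
    · by_cases h1 : k - d ≤ a
      · simp only []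
        rw [if_pos h1, show k - d = a by omega, hab, show b = k by omega]
        exact hfk
      · simp only [h1, if_neg, if_false]
        have : k - d + d = k := by omega
        rw [this]
        exact hfk
    · intro m hm
      by_cases h1 : m + 1 ≤ a
      · simp only [show m ≤ a by omega, if_pos, h1]
        exact harc m (by omega)
      · by_cases h2 : m ≤ a
        · have hma : m = a := by omega
          simp only [h2, if_pos, h1, if_neg, if_false]
          have h3 : m + 1 + d = b + 1 := by omega
          rw [h3, hma, hab]
          exact harc b (by omega)
        · simp only [h2, h1, if_neg, if_false]
          have : m + 1 + d = m + d + 1 := by omega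
          rw [this]
          exact harc (m + d) (by omega)
  have hinj : InjOn f (Iic k) := by
    intro a ha b hb hab
    simp only [mem_Iic] at ha hb
    by_contra hne
    rcases Nat.lt_or_ge a b with h | h
    · exact hinjaux a b ha hb hab h
    · exact hinjaux b a hb ha hab.symm (by omega)
  -- parity
  have hparity : ∀ i ≤ k, (f i ∈ K ↔ i % 2 = 1) := by
    intro i
    induction i with
    | zero =>
      intro _
      simp only [Nat.zero_mod]
      exact ⟨fun h => absurd (N.subset_closure K hKN.subset_ground h) hf0, by omega⟩
    | succ i ih =>
      intro hi
      have ihi := ih (by omega)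
      rcases harc i (by omega) with ⟨⟨_, hfi⟩, hfi1, _⟩ | ⟨hfi, ⟨_, hfi1⟩, _⟩
      · have : ¬ (i % 2 = 1) := fun h => hfi (ihi.2 h)
        exact ⟨fun _ => by omega, fun _ => hfi1⟩
      · have : i % 2 = 1 := ihi.1 hfi
        exact ⟨fun h => absurd h hfi1, by omega⟩
  have hkeven : k % 2 = 0 := by
    have hfkK : f k ∉ K := fun h => hfk (M.subset_closure K hKM.subset_ground h)
    have h1 : ¬ (k % 2 = 1) := fun h => hfkK ((hparity k le_rfl).2 h)
    omega
  have hex : ∃ n, 2 * n = k := by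
    refine ⟨k / 2, ?_⟩
    have h2 : k % 2 = 0 := hkeven
    omega
  obtain ⟨n, hn⟩ := hex
  refine ⟨f '' Iic k, f 0, f k, ⟨n, f, by rw [hn], ?_, by rw [hn]; exact hinj, rfl, by rw [hn],
    hf0, hfk, by rw [hn]; exact harc, by rw [hn]; exact hnj⟩, ?_⟩
  · rintro e ⟨i, hi, rfl⟩
    exact hS (hfS i hi)
  · rintro e ⟨i, hi, rfl⟩
    exact hfS i hi

lemma exists_augPath_of_card_lt (hE : M.E = N.E) (hIfin : I.Finite) (hIM : M.Indep I)
    (hIN : N.Indep I) (hJfin : J.Finite) (hJM : M.Indep J) (hJN : N.Indep J)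
    (hle : I ⊆ M.closure J ∩ N.closure J) (hcard : I.encard < J.encard) :
    ∃ P x y, IsAugPath M N I P x y ∧ P ⊆ M.closure J ∩ N.closure J := by
  classical
  set S := M.closure J ∩ N.closure J with hSdef
  have hS : S ⊆ M.E := inter_subset_left.trans (M.closure_subset_ground J)
  by_cases hW : HasWalk M N I S
  · exact exists_augPath_of_walk hIM hIN hE hS hW
  -- otherwise derive a contradiction with the cardinalities
  exfalso
  set R : Set α := {z | ∃ (k : ℕ) (f : ℕ → α), (∀ i ≤ k, f i ∈ S) ∧ f 0 ∉ N.closure I ∧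
    (∀ i < k, Arc M N I (f i) (f (i + 1))) ∧ f k = z} with hRdef
  have hRS : R ⊆ S := by
    rintro z ⟨k, f, hfS, _, _, rfl⟩
    exact hfS k le_rfl
  have hRcl : ∀ z ∈ R, z ∈ M.closure I := by
    rintro z ⟨k, f, hfS, hf0, harc, rfl⟩
    by_contra h
    exact hW ⟨k, f, hfS, hf0, h, harc⟩
  have hRext : ∀ z ∈ R, ∀ w ∈ S, Arc M N I z w → w ∈ R := by
    rintro z ⟨k, f, hfS, hf0, harc, rfl⟩ w hwS harcw
    refine ⟨k + 1, fun m => if m ≤ k then f m else w, ?_, ?_, ?_, ?_⟩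
    · intro m hm
      by_cases h : m ≤ k
      · simp only [h, if_pos]; exact hfS m h
      · simp only [h, if_neg, if_false]; exact hwS
    · simp only [Nat.zero_le, if_pos]; exact hf0
    · intro m hm
      by_cases h : m + 1 ≤ k
      · simp only [show m ≤ k by omega, if_pos, h]
        exact harc m (by omega)
      · have hmk : m = k := by omega
        subst hmk
        simp only [le_refl, if_pos, show ¬ (m + 1 ≤ m) by omega, if_neg, if_false]
        exact harcw
    · simp only [show ¬ (k + 1 ≤ k) by omega, if_neg, if_false]
  have hsrc : ∀ z ∈ S, z ∉ N.closure I → z ∈ R :=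
    fun z hz h => ⟨0, fun _ => z, fun i hi => by simpa using hz, h, by omega, rfl⟩
  have hIS : I ⊆ S := hle
  have hJS : J ⊆ S := subset_inter (M.subset_closure J hJM.subset_ground)
    (N.subset_closure J (hE ▸ hJM.subset_ground))
  -- Claim 1
  have hclaim1 : ∀ z ∈ R, z ∈ M.closure (I ∩ R) := by
    intro z hzR
    by_cases hzI : z ∈ I
    · exact M.subset_closure (I ∩ R) (inter_subset_left.trans hIM.subset_ground) ⟨hzI, hzR⟩
    obtain ⟨C, hC, hCsub, hzC⟩ := exists_fundCircuit hIM hIfin (hRcl z hzR) hzI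
    have hCIR : C \ {z} ⊆ I ∩ R := by
      rintro e ⟨heC, hez⟩
      have heI : e ∈ I := (hCsub heC).resolve_left hez
      refine ⟨heI, hRext z hzR e (hIS heI) (Or.inl ⟨⟨hS (hRS hzR), hzI⟩, heI, hRcl z hzR,
        C, hC, hCsub, hzC, heC⟩)⟩
    exact M.closure_subset_closure hCIR (hC.mem_closure_diff hzC)
  -- Claim 2
  have hclaim2 : ∀ z ∈ S, z ∉ R → z ∈ N.closure (I \ R) := by
    intro z hzS hzR
    by_cases hzI : z ∈ I
    · refine N.subset_closure (I \ R) (diff_subset.trans hIN.subset_ground) ⟨hzI, hzR⟩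
    have hzcl : z ∈ N.closure I := by
      by_contra h
      exact hzR (hsrc z hzS h)
    obtain ⟨C, hC, hCsub, hzC⟩ := exists_fundCircuit hIN hIfin hzcl hzI
    have hCIR : C \ {z} ⊆ I \ R := by
      rintro e ⟨heC, hez⟩
      have heI : e ∈ I := (hCsub heC).resolve_left hez
      refine ⟨heI, fun heR => hzR (hRext e heR z hzS (Or.inr ⟨heI, ⟨hS hzS, hzI⟩, hzcl,
        C, hC, hCsub, hzC, heC⟩))⟩
    exact N.closure_subset_closure hCIR (hC.mem_closure_diff hzC)
  -- counting
  have h1 : (J ∩ R).encard ≤ (I ∩ R).encard :=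
    encard_le_of_indep_subset_closure (hJM.subset inter_subset_left)
      (fun z hz => hclaim1 z hz.2) (inter_subset_left.trans hIM.subset_ground)
  have h2 : (J \ R).encard ≤ (I \ R).encard :=
    encard_le_of_indep_subset_closure (hJN.subset diff_subset)
      (fun z hz => hclaim2 z (hJS hz.1) hz.2) (diff_subset.trans hIN.subset_ground)
  have hJeq : (J \ R).encard + (J ∩ R).encard = J.encard := encard_diff_add_encard_inter J R
  have hIeq : (I \ R).encard + (I ∩ R).encard = I.encard := encard_diff_add_encard_inter I R
  have : J.encard ≤ I.encard := by
    rw [← hJeq, ← hIeq]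
    exact add_le_add h2 h1
  exact absurd hcard (not_lt.2 this)

lemma le_trans' (h1 : Le M N I J) (h2 : Le M N J K) : Le M N I K := fun e he =>
  ⟨M.closure_subset_closure_of_subset_closure (fun a ha => (h2 ha).1) (h1 he).1,
   N.closure_subset_closure_of_subset_closure (fun a ha => (h2 ha).2) (h1 he).2⟩

lemma span_helper (hIM : M.Indep I) (hIfin : I.Finite) (hIJ : I ⊆ M.closure J)
    (hJE : J ⊆ M.E) (hcard : J.encard ≤ I.encard) : J ⊆ M.closure I := by
  intro j hj
  by_contra hjcl
  have hjI : j ∉ I := fun h => hjcl (M.subset_closure I hIM.subset_ground h)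
  have hins : M.Indep (insert j I) := hIM.insert_indep_iff.2 (Or.inl ⟨hJE hj, hjcl⟩)
  have hsub : insert j I ⊆ M.closure J := insert_subset (M.subset_closure J hJE hj) hIJ
  have hle := encard_le_of_indep_subset_closure hins hsub hJE
  rw [encard_insert_of_notMem hjI] at hle
  have h1 : I.encard + 1 ≤ I.encard := hle.trans hcard
  rw [ENat.add_one_le_iff hIfin.encard_lt_top.ne] at h1
  exact lt_irrefl _ h1

lemma le_of_memA (hE : M.E = N.E) (hIfin : I.Finite) (hIM : M.Indep I) (hIN : N.Indep I)
    (h : MemA M N I K) : K.Finite ∧ M.Indep K ∧ N.Indep K ∧ Le M N I K := by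
  induction h with
  | refl =>
    exact ⟨hIfin, hIM, hIN, subset_inter (M.subset_closure I hIM.subset_ground)
      (N.subset_closure I (hE ▸ hIM.subset_ground))⟩
  | tail hKK' hstep ih =>
    obtain ⟨hKfin, hKM, hKN, hIK⟩ := ih
    obtain ⟨P, x, y, hP, rfl⟩ := hstep
    obtain ⟨hfin, hM, hN, hclM, hclN, _⟩ := augStep_spec hE hKfin hKM hKN hP
    refine ⟨hfin, hM, hN, fun e he => ⟨?_, ?_⟩⟩
    · exact M.closure_subset_closure_of_subset_closure hclM (hIK he).1
    · exact N.closure_subset_closure_of_subset_closure hclN (hIK he).2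

lemma forward_aux (hE : M.E = N.E) (hJfin : J.Finite) (hJM : M.Indep J) (hJN : N.Indep J) :
    ∀ (d : ℕ) (I : Set α), I.Finite → M.Indep I → N.Indep I → Le M N I J →
    J.encard ≤ I.encard + d →
    ∃ J', J'.Finite ∧ M.Indep J' ∧ N.Indep J' ∧ Sim M N J' J ∧ MemA M N I J' := by
  intro d
  induction d with
  | zero =>
    intro I hIfin hIM hIN hle hcard
    rw [Nat.cast_zero, add_zero] at hcard
    refine ⟨I, hIfin, hIM, hIN, ⟨hle, fun j hj => ⟨?_, ?_⟩⟩, Relation.ReflTransGen.refl⟩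
    · exact span_helper hIM hIfin (fun e he => (hle he).1) hJM.subset_ground hcard hj
    · exact span_helper hIN hIfin (fun e he => (hle he).2) (hE ▸ hJM.subset_ground) hcard hj
  | succ d ih =>
    intro I hIfin hIM hIN hle hcard
    by_cases hc : J.encard ≤ I.encard
    · exact ih I hIfin hIM hIN hle (hc.trans le_self_add)
    push_neg at hc
    obtain ⟨P, x, y, hP, hPS⟩ := exists_augPath_of_card_lt hE hIfin hIM hIN hJfin hJM hJN hle hc
    have hAug : AugStep M N I (I ∆ P) := ⟨P, x, y, hP, rfl⟩
    obtain ⟨hfin, hM, hN, hclM, hclN, hcardP⟩ := augStep_spec hE hIfin hIM hIN hP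
    have hle' : Le M N (I ∆ P) J := fun e he => by
      rcases (symmDiff_subset_union : I ∆ P ⊆ I ∪ P) he with h | h
      · exact hle h
      · exact hPS h
    have hcard' : J.encard ≤ (I ∆ P).encard + d := by
      rw [hcardP]
      calc J.encard ≤ I.encard + (d + 1 : ℕ) := hcard
        _ = I.encard + 1 + d := by push_cast; ring
    obtain ⟨J', h1, h2, h3, h4, h5⟩ := ih (I ∆ P) hfin hM hN hle' hcard'
    exact ⟨J', h1, h2, h3, h4, Relation.ReflTransGen.head hAug h5⟩


/-- `I ⊴ J` iff some `J' ∼ J` belongs to `A(I)`. -/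
theorem statement15 (M N : Matroid α) [M.Finitary] [N.Finitary] (hE : M.E = N.E)
    (I J : Set α) (hIfin : I.Finite) (hIM : M.Indep I) (hIN : N.Indep I)
    (hJfin : J.Finite) (hJM : M.Indep J) (hJN : N.Indep J) :
    Le M N I J ↔
      ∃ J', J'.Finite ∧ M.Indep J' ∧ N.Indep J' ∧ Sim M N J' J ∧ MemA M N I J' := by
  constructor
  · intro hle
    obtain ⟨d, hd⟩ : ∃ d : ℕ, J.encard = d := ⟨hJfin.toFinset.card,
      by rw [hJfin.encard_eq_coe_toFinset_card]⟩
    exact forward_aux hE hJfin hJM hJN d I hIfin hIM hIN hle (hd ▸ le_add_self)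
  · rintro ⟨J', hJ'fin, hJ'M, hJ'N, hsim, hmem⟩
    exact le_trans' (le_of_memA hE hIfin hIM hIN hmem).2.2.2 hsim.1

end AZ
end

section
/- Let I be a common independent set of M and N and let x ∈ E ∖ span_N(I) be such that there is no augmenting path for I starting at x. Then E(x,I) ⊆ span_M(I ∩ E(x,I)). -/
open Set Matroid
open scoped symmDiff

namespace AZ

variable {α : Type*}

section Aux

variable {M N : Matroid α} {I : Set α} {x z : α}

/-- Every dependent set in a finitary matroid contains a circuit. -/
lemma circuit_of_dep (M : Matroid α) [M.Finitary] {D : Set α} (hD : ¬ M.Indep D)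
    (hDE : D ⊆ M.E) : ∃ C ⊆ D, Circuit M C := by
  classical
  have h1 : ∃ k, ∃ F, F ⊆ D ∧ F.Finite ∧ ¬ M.Indep F ∧ F.ncard = k := by
    by_contra h
    push_neg at h
    exact hD <| M.indep_of_forall_finite_subset_indep D fun F hF hfin => by
      by_contra hFd
      exact h F.ncard F hF hfin hFd rfl
  obtain ⟨F, hFD, hFfin, hFdep, hk⟩ := Nat.find_spec h1
  refine ⟨F, hFD, hFD.trans hDE, hFdep, ?_⟩
  intro D' hD'
  by_contra hdep
  have hlt : D'.ncard < Nat.find h1 := by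
    rw [← hk]
    exact Set.ncard_lt_ncard hD' hFfin
  exact Nat.find_min h1 hlt ⟨D', (hD'.subset).trans hFD, hFfin.subset hD'.subset, hdep, rfl⟩

/-- A path in the exchange digraph, as a function. -/
def IsPath (M N : Matroid α) (I : Set α) (x z : α) (n : ℕ) (f : ℕ → α) : Prop :=
  f 0 = x ∧ f n = z ∧ ∀ i < n, Arc M N I (f i) (f (i + 1))

lemma exists_path (h : Relation.ReflTransGen (Arc M N I) x z) :
    ∃ n f, IsPath M N I x z n f := by
  induction h with
  | refl => exact ⟨0, fun _ => x, rfl, rfl, by omega⟩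
  | @tail b c hab hbc ih =>
    obtain ⟨n, f, h0, hn, hstep⟩ := ih
    refine ⟨n + 1, fun k => if k ≤ n then f k else c, by simp [h0], by simp, ?_⟩
    intro i hi
    rcases Nat.lt_or_ge i n with hlt | hge
    · simpa [Nat.le_of_lt hlt, Nat.succ_le_of_lt hlt] using hstep i hlt
    · have hin : i = n := by omega
      subst hin
      simpa [hn] using hbc

lemma arc_mem_ground (hIE : I ⊆ M.E) {a b : α} (h : Arc M N I a b) : b ∈ M.E := by
  rcases h with ⟨_, hb, _⟩ | ⟨_, hb, _⟩
  · exact hIE hb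
  · exact hb.1

lemma arc_flip {a b : α} (h : Arc M N I a b) : (a ∈ I ↔ b ∉ I) := by
  rcases h with ⟨ha, hb, _⟩ | ⟨ha, hb, _⟩
  · exact iff_of_false ha.2 (not_not_intro hb)
  · exact iff_of_true ha hb.2

/-- If there is a path from `x ∉ span_N I` to `z ∉ span_M I`, there is an
augmenting path from `x` to `z`. -/
lemma exists_augpath (hIM : M.Indep I) (hIN : N.Indep I)
    (hx : x ∈ M.E \ N.closure I)
    (hz : Relation.ReflTransGen (Arc M N I) x z) (hzI : z ∉ I)
    (hzcl : z ∉ M.closure I) : ∃ P, IsAugPath M N I P x z := by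
  classical
  have hxI : x ∉ I := fun h => hx.2 (N.subset_closure I hIN.subset_ground h)
  have hex : ∃ n, ∃ f, IsPath M N I x z n f := exists_path hz
  set n := Nat.find hex with hndef
  obtain ⟨f, h0, hn, hstep⟩ := Nat.find_spec hex
  -- no jumping arcs
  have hnojump : ∀ i j, i + 1 < j → j ≤ n → ¬ Arc M N I (f i) (f j) := by
    intro i j hij hjn harc
    have hmlt : n + i + 1 - j < n := by omega
    refine Nat.find_min hex hmlt ⟨fun k => if k ≤ i then f k else f (k - i - 1 + j), ?_, ?_, ?_⟩
    · simp [h0]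
    · beta_reduce
      have : ¬ (n + i + 1 - j ≤ i) := by omega
      rw [if_neg this]
      have : n + i + 1 - j - i - 1 + j = n := by omega
      rw [this, hn]
    · intro k hk
      beta_reduce
      rcases Nat.lt_or_ge k i with hlt | hge
      · have h1 : k ≤ i := by omega
        have h2 : k + 1 ≤ i := by omega
        rw [if_pos h1, if_pos h2]
        exact hstep k (by omega)
      · rcases Nat.eq_or_lt_of_le hge with heq | hgt
        · subst heq
          rw [if_pos le_rfl, if_neg (by omega)]
          have : i + 1 - i - 1 + j = j := by omega
          rw [this]
          exact harc
        · rw [if_neg (by omega), if_neg (by omega)]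
          have : k + 1 - i - 1 + j = (k - i - 1 + j) + 1 := by omega
          rw [this]
          exact hstep _ (by omega)
  -- injectivity
  have hinj' : ∀ i j, i < j → j ≤ n → f i ≠ f j := by
    intro i j hij hjn heq
    have hmlt : n + i - j < n := by omega
    refine Nat.find_min hex hmlt ⟨fun k => if k ≤ i then f k else f (k - i + j), ?_, ?_, ?_⟩
    · simp [h0]
    · beta_reduce
      rcases Nat.lt_or_ge i (n + i - j) with hlt | hge
      · rw [if_neg (by omega)]
        have : n + i - j - i + j = n := by omega
        rw [this, hn]
      · have hji : j = n := by omega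
        have hii : n + i - j = i := by omega
        rw [hii, if_pos le_rfl, heq, hji, hn]
    · intro k hk
      beta_reduce
      rcases Nat.lt_or_ge k i with hlt | hge
      · rw [if_pos (by omega : k ≤ i), if_pos (by omega : k + 1 ≤ i)]
        exact hstep k (by omega)
      · rcases Nat.eq_or_lt_of_le hge with hkeq | hgt
        · subst hkeq
          rw [if_pos le_rfl, if_neg (by omega), heq]
          have : i + 1 - i + j = j + 1 := by omega
          rw [this]
          exact hstep j (by omega)
        · rw [if_neg (by omega), if_neg (by omega)]
          have : k + 1 - i + j = (k - i + j) + 1 := by omega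
          rw [this]
          exact hstep _ (by omega)
  -- parity
  have hpar : ∀ i ≤ n, (f i ∈ I ↔ i % 2 = 1) := by
    intro i
    induction i with
    | zero => intro _; simp [h0, hxI]
    | succ m ih =>
      intro hm
      have hflip := arc_flip (hstep m (by omega))
      have ihm := ih (by omega)
      have hmod : (m + 1) % 2 = 1 ↔ ¬ (m % 2 = 1) := by omega
      rw [hmod, ← ihm]
      tauto
  -- ground
  have hgr : ∀ i ≤ n, f i ∈ M.E := by
    intro i
    induction i with
    | zero => intro _; rw [h0]; exact hx.1
    | succ m ih =>
      intro hm
      exact arc_mem_ground hIM.subset_ground (hstep m (by omega))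
  -- n is even
  have hneven : n % 2 = 0 := by
    by_contra h
    have : n % 2 = 1 := by omega
    exact hzI (hn ▸ (hpar n le_rfl).2 this)
  refine ⟨f '' Set.Iic n, n / 2, f, ?_, ?_, ?_, h0, ?_, hx.2, hzcl, ?_, ?_⟩
  · rw [(by omega : 2 * (n / 2) = n)]
  · rintro y ⟨i, hi, rfl⟩
    exact hgr i hi
  · intro i hi j hj heq
    rw [Set.mem_Iic, (by omega : 2 * (n / 2) = n)] at hi hj
    rcases lt_trichotomy i j with h | h | h
    · exact absurd heq (hinj' i j h hj)
    · exact h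
    · exact absurd heq.symm (hinj' j i h hi)
  · rw [(by omega : 2 * (n / 2) = n), hn]
  · intro i hi
    exact hstep i (by omega)
  · intro i j hij hjn
    exact hnojump i j hij (by omega)

lemma reach_mem_ground (hIE : I ⊆ M.E) (hxE : x ∈ M.E)
    (h : Relation.ReflTransGen (Arc M N I) x z) : z ∈ M.E := by
  induction h with
  | refl => exact hxE
  | tail _ hbc _ => exact arc_mem_ground hIE hbc

end Aux

/-- If `I` is a common independent set, `x ∈ E ∖ span_N(I)`, and there is no augmenting
path for `I` starting at `x`, then `E(x,I) ⊆ span_M(I ∩ E(x,I))`. -/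
theorem statement19 (M N : Matroid α) [M.Finitary] [N.Finitary] (hE : M.E = N.E)
    (I : Set α) (hIM : M.Indep I) (hIN : N.Indep I)
    (x : α) (hx : x ∈ M.E \ N.closure I)
    (hnoaug : ¬ ∃ P y, IsAugPath M N I P x y) :
    Reach M N I x ⊆ M.closure (I ∩ Reach M N I x) := by
  intro z hz
  have hIE : I ⊆ M.E := hIM.subset_ground
  by_cases hzI : z ∈ I
  · exact M.subset_closure _ (Set.inter_subset_left.trans hIE) ⟨hzI, hz⟩
  have hzE : z ∈ M.E := reach_mem_ground hIE hx.1 hz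
  have hzcl : z ∈ M.closure I := by
    by_contra h
    obtain ⟨P, hP⟩ := exists_augpath hIM hIN hx hz hzI h
    exact hnoaug ⟨P, z, hP⟩
  have hdep : ¬ M.Indep (insert z I) :=
    ((hIM.mem_closure_iff_of_notMem hzI).1 hzcl).not_indep
  obtain ⟨C, hCsub, hCE, hCdep, hCmin⟩ :=
    circuit_of_dep M hdep (Set.insert_subset hzE hIE)
  have hzC : z ∈ C := by
    by_contra h
    exact hCdep (hIM.subset fun y hy => ((hCsub hy).resolve_left (by rintro rfl; exact h hy)))
  have hCI : C \ {z} ⊆ I := fun y hy =>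
    (hCsub hy.1).resolve_left (by rintro rfl; exact hy.2 rfl)
  have hind : M.Indep (C \ {z}) :=
    hCmin _ ((Set.sdiff_singleton_ssubset).2 hzC)
  have hz2 : z ∈ M.closure (C \ {z}) := by
    rw [hind.mem_closure_iff_of_notMem (by simp)]
    have hins : insert z (C \ {z}) = C := by
      rw [Set.insert_diff_singleton, Set.insert_eq_self.2 hzC]
    rw [Matroid.dep_iff, hins]
    exact ⟨hCdep, hCE⟩
  refine Set.mem_of_mem_of_subset hz2 (M.closure_subset_closure ?_)
  intro y hy
  refine ⟨hCI hy, ?_⟩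
  exact Relation.ReflTransGen.tail hz
    (Or.inl ⟨⟨hzE, hzI⟩, hCI hy, hzcl, C, ⟨hCE, hCdep, hCmin⟩, hCsub, hzC, hy.1⟩)

end AZ
end
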